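/- arXiv:1110.2269 — 3 statements merged into one kernel-verified Lean document; each statement's English description precedes it below -/
import Mathlib

section
/- Let E be a k-coloured graph and C a complete, associative collection of squares. Composition of C-compatible coloured-graph morphisms (defined via unique extension) is associative: λ(μν) = (λμ)ν whenever s(λ) = r(μ) and s(μ) = r(ν). -/
namespace Paper


/-- A `k`-coloured (directed) graph. -/
structure ColouredGraph (k : ℕ) where
  V : Type
  E : Type
  r : E → V
  s : E → V
  c : E → Fin k

variable {k : ℕ}

/-- The model grid `E_{k,m}`: vertices `{n ≤ m}`, an edge of colour `i`
from `n + e_i` to `n` whenever `n + e_i ≤ m`. -/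
def grid (k : ℕ) (m : Fin k → ℕ) : ColouredGraph k where
  V := {n : Fin k → ℕ // n ≤ m}
  E := {p : (Fin k → ℕ) × Fin k // p.1 + Pi.single p.2 1 ≤ m}
  r e := ⟨e.1.1, le_trans (le_add_of_nonneg_right zero_le) e.2⟩
  s e := ⟨e.1.1 + Pi.single e.1.2 1, e.2⟩
  c e := e.1.2

/-- A coloured-graph morphism. -/
structure CGM (E F : ColouredGraph k) where
  onV : E.V → F.V
  onE : E.E → F.E
  r_comm : ∀ e, F.r (onE e) = onV (E.r e)
  s_comm : ∀ e, F.s (onE e) = onV (E.s e)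
  c_comm : ∀ e, F.c (onE e) = E.c e

/-- Composition of coloured-graph morphisms. -/
def CGM.compose {E F G : ColouredGraph k} (g : CGM F G) (f : CGM E F) : CGM E G where
  onV := g.onV ∘ f.onV
  onE := g.onE ∘ f.onE
  r_comm e := by simp [Function.comp, g.r_comm, f.r_comm]
  s_comm e := by simp [Function.comp, g.s_comm, f.s_comm]
  c_comm e := by simp [Function.comp, g.c_comm, f.c_comm]

/-- The range `λ(0)` of a coloured-graph morphism defined on a grid. -/
def gRng {E : ColouredGraph k} {m : Fin k → ℕ} (lam : CGM (grid k m) E) : E.V :=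
  lam.onV ⟨0, zero_le⟩

/-- The source `λ(m)` of a coloured-graph morphism defined on a grid. -/
def gSrc {E : ColouredGraph k} {m : Fin k → ℕ} (lam : CGM (grid k m) E) : E.V :=
  lam.onV ⟨m, le_refl m⟩

/-- The translated restriction `λ|*_{[p, p+m']}` of `λ : E_{k,M} → E`. -/
def restrictTo {E : ColouredGraph k} {M : Fin k → ℕ} (lam : CGM (grid k M) E)
    (p m' : Fin k → ℕ) (h : p + m' ≤ M) : CGM (grid k m') E where
  onV n := lam.onV ⟨p + n.1, le_trans (add_le_add le_rfl n.2) h⟩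
  onE e := lam.onE ⟨(p + e.1.1, e.1.2), by
    rw [add_assoc]; exact le_trans (add_le_add le_rfl e.2) h⟩
  r_comm e := lam.r_comm _
  s_comm e := by
    exact (lam.s_comm _).trans (congrArg lam.onV (Subtype.ext (add_assoc p e.1.1 _)))
  c_comm e := lam.c_comm _

/-- A coloured-graph morphism from some grid into `E`, bundled with its degree. -/
def MorphOf (E : ColouredGraph k) : Type := Σ m : Fin k → ℕ, CGM (grid k m) E

/-- The shape (abelianized colouring) of a finite path, as an element of `ℕ^k`. -/
def colourVec (E : ColouredGraph k) (x : List E.E) : Fin k → ℕ :=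
  (x.map (fun e => Pi.single (E.c e) 1)).sum

/-- A list of edges is a path when consecutive edges are composable. -/
def IsPathList (E : ColouredGraph k) (x : List E.E) : Prop :=
  x.Chain' (fun e f => E.s e = E.r f)

/-- `x` traverses `λ`: the edges of `x` match those of `λ` along the staircase
determined by the colour sequence of `x`. -/
def Traverses {E : ColouredGraph k} {m : Fin k → ℕ} (lam : CGM (grid k m) E)
    (x : List E.E) : Prop :=
  colourVec E x = m ∧ ∀ (l : ℕ) (hl : l < x.length),
    ∃ h : colourVec E (x.take l) + Pi.single (E.c (x.get ⟨l, hl⟩)) 1 ≤ m,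
      lam.onE ⟨(colourVec E (x.take l), E.c (x.get ⟨l, hl⟩)), h⟩ = x.get ⟨l, hl⟩

/-- A bundled grid morphism is a square when its degree is `e_i + e_j` with `i ≠ j`. -/
def IsSquarePair {E : ColouredGraph k} (φ : MorphOf E) : Prop :=
  ∃ i j : Fin k, i ≠ j ∧ φ.1 = Pi.single i 1 + Pi.single j 1

/-- A complete collection of squares. -/
def Complete (E : ColouredGraph k) (C : Set (MorphOf E)) : Prop :=
  (∀ φ ∈ C, IsSquarePair φ) ∧
  ∀ e f : E.E, E.s e = E.r f → E.c e ≠ E.c f →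
    ∃! φ : MorphOf E, φ ∈ C ∧ Traverses φ.2 [e, f]

/-- `CRel C e f f' e'` means `ef ∼_C f'e'`: the paths `ef` and `f'e'` traverse a
common square of `C`, with `f'` of the colour of `f` and `e'` of the colour of `e`. -/
def CRel (E : ColouredGraph k) (C : Set (MorphOf E)) (e f f' e' : E.E) : Prop :=
  E.c f' = E.c f ∧ E.c e' = E.c e ∧
  ∃ φ ∈ C, Traverses φ.2 [e, f] ∧ Traverses φ.2 [f', e']

/-- Associativity of a complete collection of squares. -/
def Associative (E : ColouredGraph k) (C : Set (MorphOf E)) : Prop :=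
  ∀ f g h f1 f2 g1 g2 h1 h2 f1' f2' g1' g2' h1' h2' : E.E,
    E.s f = E.r g → E.s g = E.r h →
    E.c f ≠ E.c g → E.c g ≠ E.c h → E.c f ≠ E.c h →
    CRel E C f g g1' f1' → CRel E C f1' h h1' f2' → CRel E C g1' h1' h2' g2' →
    CRel E C g h h1 g1 → CRel E C f h1 h2 f1 → CRel E C f1 g1 g2 f2 →
    f2 = f2' ∧ g2 = g2' ∧ h2 = h2'

/-- `λ` is `C`-compatible: every square occurring in `λ` belongs to `C`. -/
def CComp (E : ColouredGraph k) (C : Set (MorphOf E)) {M : Fin k → ℕ}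
    (lam : CGM (grid k M) E) : Prop :=
  ∀ (p : Fin k → ℕ) (i j : Fin k), i ≠ j →
    ∀ h : p + (Pi.single i 1 + Pi.single j 1) ≤ M,
      (⟨Pi.single i 1 + Pi.single j 1,
        restrictTo lam p (Pi.single i 1 + Pi.single j 1) h⟩ : MorphOf E) ∈ C

/-- A finite path in a coloured graph, remembering its range vertex (so that
length-zero paths are vertices). -/
structure FinPath (E : ColouredGraph k) where
  rng : E.V
  edges : List E.E
  chain : edges.Chain' (fun e f => E.s e = E.r f)
  head_rng : ∀ e ∈ edges.head?, E.r e = rng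

/-- Source vertex of a finite path. -/
def FinPath.src {E : ColouredGraph k} (x : FinPath E) : E.V :=
  (x.edges.getLast?).elim x.rng E.s

/-- One application of a commuting square: replace a consecutive bicoloured pair
by its `C`-equivalent pair. -/
def SwapStep (E : ColouredGraph k) (C : Set (MorphOf E)) (x y : List E.E) : Prop :=
  ∃ (l r : List E.E) (e f f' e' : E.E),
    x = l ++ e :: f :: r ∧ y = l ++ f' :: e' :: r ∧ CRel E C e f f' e'

/-- The relation on finite paths generating the equivalence `∼`. -/
def PathRel (E : ColouredGraph k) (C : Set (MorphOf E)) (x y : FinPath E) : Prop :=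
  x.rng = y.rng ∧ SwapStep E C x.edges y.edges



section Aux

variable {E : ColouredGraph k} {C : Set (MorphOf E)}

lemma CGM.ext' {F G : ColouredGraph k} {f g : CGM F G} (hV : f.onV = g.onV)
    (hE : f.onE = g.onE) : f = g := by
  cases f; cases g; cases hV; cases hE; rfl

lemma onE_congr {M : Fin k → ℕ} (lam : CGM (grid k M) E) {a b : (grid k M).E}
    (h : a.1 = b.1) : lam.onE a = lam.onE b := congrArg _ (Subtype.ext h)

/-- sum of colours of a word -/
def wsum (w : List (Fin k)) : Fin k → ℕ := (w.map (fun i => Pi.single i 1)).sum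

@[simp] lemma wsum_nil : wsum ([] : List (Fin k)) = 0 := rfl

@[simp] lemma wsum_cons (a : Fin k) (w : List (Fin k)) :
    wsum (a :: w) = Pi.single a 1 + wsum w := rfl

@[simp] lemma wsum_append (u v : List (Fin k)) : wsum (u ++ v) = wsum u + wsum v := by
  simp [wsum]

lemma count_eq_wsum (w : List (Fin k)) (a : Fin k) : w.count a = wsum w a := by
  induction w with
  | nil => simp
  | cons b w ih =>
    rw [List.count_cons, wsum_cons, Pi.add_apply, ih, Pi.single_apply]
    by_cases h : a = b
    · subst h; simp [Nat.add_comm]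
    · simp [h, Ne.symm h]

/-- a standard word with given colour sum -/
def wd (v : Fin k → ℕ) : List (Fin k) := (List.finRange k).flatMap fun i => List.replicate (v i) i

lemma wsum_replicate (c : ℕ) (i : Fin k) : wsum (List.replicate c i) = Pi.single i c := by
  induction c with
  | zero => simp [wsum]
  | succ n ih =>
    rw [List.replicate_succ, wsum_cons, ih, ← Pi.single_add, add_comm]

lemma wsum_wd (v : Fin k → ℕ) : wsum (wd v) = v := by
  have h : ∀ L : List (Fin k), wsum (L.flatMap fun i => List.replicate (v i) i)
      = (L.map fun i => Pi.single i (v i)).sum := by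
    intro L
    induction L with
    | nil => simp [wsum]
    | cons a L ih => rw [List.flatMap_cons, wsum_append, ih, wsum_replicate, List.map_cons,
        List.sum_cons]
  rw [wd, h, ← Fin.sum_univ_def, Finset.univ_sum_single]

/-- cross agreement of two grid morphisms along a word based at `p` -/
def CAg {M M' : Fin k → ℕ} (lam : CGM (grid k M) E) (lam' : CGM (grid k M') E) :
    (Fin k → ℕ) → List (Fin k) → Prop
  | _, [] => True
  | p, i :: w =>
      (∀ (h : p + Pi.single i 1 ≤ M) (h' : p + Pi.single i 1 ≤ M'),
        lam.onE ⟨(p, i), h⟩ = lam'.onE ⟨(p, i), h'⟩) ∧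
      CAg lam lam' (p + Pi.single i 1) w

lemma CAg_of_rest {M M' m' : Fin k → ℕ}
    {lam : CGM (grid k M) E} {lam' : CGM (grid k M') E} {σ : CGM (grid k m') E}
    {pt : Fin k → ℕ}
    (h1 : ∀ (r : Fin k → ℕ) (i : Fin k) (hr : r + Pi.single i 1 ≤ m')
      (h : pt + r + Pi.single i 1 ≤ M), lam.onE ⟨(pt + r, i), h⟩ = σ.onE ⟨(r, i), hr⟩)
    (h2 : ∀ (r : Fin k → ℕ) (i : Fin k) (hr : r + Pi.single i 1 ≤ m')
      (h : pt + r + Pi.single i 1 ≤ M'), lam'.onE ⟨(pt + r, i), h⟩ = σ.onE ⟨(r, i), hr⟩) :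
    ∀ (u : List (Fin k)) (r : Fin k → ℕ), r + wsum u ≤ m' → CAg lam lam' (pt + r) u := by
  intro u
  induction u with
  | nil => intro r _; trivial
  | cons i u ih =>
    intro r hu
    rw [wsum_cons, ← add_assoc] at hu
    have hr : r + Pi.single i 1 ≤ m' := le_trans le_self_add hu
    refine ⟨fun h h' => ?_, ?_⟩
    · rw [h1 r i hr h, h2 r i hr h']
    · have := ih (r + Pi.single i 1) hu
      rwa [← add_assoc] at this

lemma CAg_append {M M' : Fin k → ℕ}
    {lam : CGM (grid k M) E} {lam' : CGM (grid k M') E} {v : List (Fin k)} :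
    ∀ (u : List (Fin k)) (p : Fin k → ℕ), CAg lam lam' p u →
      CAg lam lam' (p + wsum u) v → CAg lam lam' p (u ++ v) := by
  intro u
  induction u with
  | nil => intro p _ h2; exact h2
  | cons a u ih =>
    intro p h1 h2
    rw [wsum_cons, ← add_assoc] at h2
    exact ⟨h1.1, ih _ h1.2 h2⟩

lemma CAg_drop {M M' : Fin k → ℕ}
    {lam : CGM (grid k M) E} {lam' : CGM (grid k M') E} {v : List (Fin k)} :
    ∀ (u : List (Fin k)) (p : Fin k → ℕ), CAg lam lam' p (u ++ v) →
      CAg lam lam' (p + wsum u) v := by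
  intro u
  induction u with
  | nil => intro p h; exact h
  | cons a u ih =>
    intro p h
    rw [wsum_cons, ← add_assoc]
    exact ih _ h.2

lemma restrict_traverses {M : Fin k → ℕ} (lam : CGM (grid k M) E)
    (p : Fin k → ℕ) (i j : Fin k) (h : p + (Pi.single i 1 + Pi.single j 1) ≤ M)
    (hi : p + Pi.single i 1 ≤ M) (hj : p + Pi.single i 1 + Pi.single j 1 ≤ M) :
    Traverses (restrictTo lam p (Pi.single i 1 + Pi.single j 1) h)
      [lam.onE ⟨(p, i), hi⟩, lam.onE ⟨(p + Pi.single i 1, j), hj⟩] := by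
  have hci : E.c (lam.onE ⟨(p, i), hi⟩) = i := lam.c_comm _
  have hcj : E.c (lam.onE ⟨(p + Pi.single i 1, j), hj⟩) = j := lam.c_comm _
  constructor
  · show Pi.single (E.c _) 1 + (Pi.single (E.c _) 1 + 0) = _
    rw [hci, hcj, add_zero]
  · intro l hl
    match l, hl with
    | 0, _ =>
      refine ⟨?_, ?_⟩
      · show (0 : Fin k → ℕ) + Pi.single (E.c (lam.onE ⟨(p, i), hi⟩)) 1 ≤
          Pi.single i 1 + Pi.single j 1
        rw [hci, zero_add]; exact le_self_add
      · exact onE_congr lam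
          (a := ⟨(p + 0, E.c (lam.onE ⟨(p, i), hi⟩)), by rw [hci]; exact hi⟩)
          (b := ⟨(p, i), hi⟩)
          (by show (p + 0, E.c (lam.onE ⟨(p, i), hi⟩)) = ((p : Fin k → ℕ), i)
              rw [hci]; rfl)
    | 1, _ =>
      refine ⟨?_, ?_⟩
      · show Pi.single (E.c (lam.onE ⟨(p, i), hi⟩)) 1 + 0 +
          Pi.single (E.c (lam.onE ⟨(p + Pi.single i 1, j), hj⟩)) 1 ≤
          Pi.single i 1 + Pi.single j 1
        rw [hci, hcj, add_zero]
      · exact onE_congr lam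
          (a := ⟨(p + (Pi.single (E.c (lam.onE ⟨(p, i), hi⟩)) 1 + 0),
            E.c (lam.onE ⟨(p + Pi.single i 1, j), hj⟩)),
            by rw [hci, hcj, add_zero]; exact hj⟩)
          (b := ⟨(p + Pi.single i 1, j), hj⟩)
          (by show (p + (Pi.single (E.c (lam.onE ⟨(p, i), hi⟩)) 1 + 0),
                E.c (lam.onE ⟨(p + Pi.single i 1, j), hj⟩)) = (p + Pi.single i 1, j)
              rw [hci, hcj, add_zero])

lemma square_eq (hcomp : Complete E C) {M : Fin k → ℕ} {lam lam' : CGM (grid k M) E}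
    (hc : CComp E C lam) (hc' : CComp E C lam') {p : Fin k → ℕ} {i j : Fin k} (hne : i ≠ j)
    (h : p + (Pi.single i 1 + Pi.single j 1) ≤ M)
    (hi : p + Pi.single i 1 ≤ M) (hj : p + Pi.single i 1 + Pi.single j 1 ≤ M)
    (he : lam.onE ⟨(p, i), hi⟩ = lam'.onE ⟨(p, i), hi⟩)
    (hf : lam.onE ⟨(p + Pi.single i 1, j), hj⟩ = lam'.onE ⟨(p + Pi.single i 1, j), hj⟩) :
    restrictTo lam p (Pi.single i 1 + Pi.single j 1) h
      = restrictTo lam' p (Pi.single i 1 + Pi.single j 1) h := by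
  have hsr : E.s (lam.onE ⟨(p, i), hi⟩) = E.r (lam.onE ⟨(p + Pi.single i 1, j), hj⟩) := by
    exact (lam.s_comm ⟨(p, i), hi⟩).trans (lam.r_comm ⟨(p + Pi.single i 1, j), hj⟩).symm
  have hcc : E.c (lam.onE ⟨(p, i), hi⟩) ≠ E.c (lam.onE ⟨(p + Pi.single i 1, j), hj⟩) := by
    exact fun hh => hne ((lam.c_comm _).symm.trans (hh.trans (lam.c_comm _)))
  obtain ⟨φ, -, hu⟩ := hcomp.2 _ _ hsr hcc
  have t1 : Traverses (restrictTo lam p (Pi.single i 1 + Pi.single j 1) h)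
      [lam.onE ⟨(p, i), hi⟩, lam.onE ⟨(p + Pi.single i 1, j), hj⟩] :=
    restrict_traverses lam p i j h hi hj
  have t2 : Traverses (restrictTo lam' p (Pi.single i 1 + Pi.single j 1) h)
      [lam.onE ⟨(p, i), hi⟩, lam.onE ⟨(p + Pi.single i 1, j), hj⟩] := by
    rw [he, hf]
    exact restrict_traverses lam' p i j h hi hj
  have e1 := hu ⟨Pi.single i 1 + Pi.single j 1,
      restrictTo lam p (Pi.single i 1 + Pi.single j 1) h⟩ ⟨hc p i j hne h, t1⟩
  have e2 := hu ⟨Pi.single i 1 + Pi.single j 1,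
      restrictTo lam' p (Pi.single i 1 + Pi.single j 1) h⟩ ⟨hc' p i j hne h, t2⟩
  have e3 := e1.trans e2.symm
  exact eq_of_heq (Sigma.ext_iff.mp e3).2

lemma CAg_swap_head (hcomp : Complete E C) {M : Fin k → ℕ}
    {lam lam' : CGM (grid k M) E} (hc : CComp E C lam) (hc' : CComp E C lam')
    {p : Fin k → ℕ} {i j : Fin k} {v : List (Fin k)}
    (hb : p + wsum (i :: j :: v) ≤ M) (hAg : CAg lam lam' p (i :: j :: v)) :
    CAg lam lam' p (j :: i :: v) := by
  by_cases hij : i = j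
  · subst hij; exact hAg
  · rw [wsum_cons, wsum_cons] at hb
    have h : p + (Pi.single i 1 + Pi.single j 1) ≤ M :=
      le_trans (add_le_add le_rfl (add_le_add le_rfl le_self_add)) hb
    have hi : p + Pi.single i 1 ≤ M := le_trans (add_le_add le_rfl le_self_add) h
    have hj : p + Pi.single i 1 + Pi.single j 1 ≤ M := by rw [add_assoc]; exact h
    obtain ⟨h1, h2, hv⟩ := hAg
    have hsq := square_eq hcomp hc hc' hij h hi hj (h1 hi hi) (h2 hj hj)
    have hosq := congrArg CGM.onE hsq
    refine ⟨fun hh hh' => ?_, fun hh hh' => ?_, ?_⟩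
    · have pf : (0 : Fin k → ℕ) + Pi.single j 1 ≤ Pi.single i 1 + Pi.single j 1 := by
        exact add_le_add zero_le (le_refl _)
      exact congrFun hosq ⟨((0 : Fin k → ℕ), j), pf⟩
    · have pf : (Pi.single j 1 : Fin k → ℕ) + Pi.single i 1 ≤ Pi.single i 1 + Pi.single j 1 :=
        le_of_eq (add_comm _ _)
      exact congrFun hosq ⟨(Pi.single j 1, i), pf⟩
    · rwa [add_right_comm p (Pi.single i 1) (Pi.single j 1)] at hv

lemma CAg_swap_at (hcomp : Complete E C) {M : Fin k → ℕ}
    {lam lam' : CGM (grid k M) E} (hc : CComp E C lam) (hc' : CComp E C lam')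
    {i j : Fin k} {v : List (Fin k)} :
    ∀ (u : List (Fin k)) (p : Fin k → ℕ), p + wsum (u ++ i :: j :: v) ≤ M →
      CAg lam lam' p (u ++ i :: j :: v) → CAg lam lam' p (u ++ j :: i :: v) := by
  intro u
  induction u with
  | nil => intro p hb hAg; exact CAg_swap_head hcomp hc hc' hb hAg
  | cons a u ih =>
    intro p hb hAg
    rw [List.cons_append, wsum_cons, ← add_assoc] at hb
    exact ⟨hAg.1, ih _ hb hAg.2⟩

/-- one adjacent transposition on words -/
def WStep (w w' : List (Fin k)) : Prop :=
  ∃ (u v : List (Fin k)) (i j : Fin k), w = u ++ i :: j :: v ∧ w' = u ++ j :: i :: v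

lemma WStep.wsum_eq {w w' : List (Fin k)} (h : WStep w w') : wsum w' = wsum w := by
  obtain ⟨u, v, i, j, rfl, rfl⟩ := h
  simp [add_left_comm, add_assoc, add_comm]

lemma perm_steps {w w' : List (Fin k)} (h : w.Perm w') :
    Relation.ReflTransGen WStep w w' := by
  induction h with
  | nil => exact .refl
  | cons a _ ih =>
    exact Relation.ReflTransGen.lift (p := WStep) (List.cons a)
      (fun x y hxy => by
        obtain ⟨u, v, i, j, rfl, rfl⟩ := hxy
        exact ⟨a :: u, v, i, j, rfl, rfl⟩) _ _ ih
  | swap x y l => exact Relation.ReflTransGen.single ⟨[], l, y, x, rfl, rfl⟩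
  | trans _ _ ih1 ih2 => exact ih1.trans ih2

lemma CAg_rtg (hcomp : Complete E C) {M : Fin k → ℕ}
    {lam lam' : CGM (grid k M) E} (hc : CComp E C lam) (hc' : CComp E C lam')
    {w w' : List (Fin k)} (h : Relation.ReflTransGen WStep w w')
    (hw : wsum w = M) (hAg : CAg lam lam' 0 w) :
    CAg lam lam' 0 w' ∧ wsum w' = M := by
  induction h with
  | refl => exact ⟨hAg, hw⟩
  | tail _ hst ih =>
    obtain ⟨hb, hwb⟩ := ih
    obtain ⟨u, v, i, j, rfl, rfl⟩ := hst
    constructor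
    · exact CAg_swap_at hcomp hc hc' u 0 (by rw [zero_add, hwb]) hb
    · rw [WStep.wsum_eq ⟨u, v, i, j, rfl, rfl⟩, hwb]

lemma morph_eq (hcomp : Complete E C) {M M' : Fin k → ℕ} (hMM : M = M')
    (lam : CGM (grid k M) E) (lam' : CGM (grid k M') E)
    (hc : CComp E C lam) (hc' : CComp E C lam')
    (w0 : List (Fin k)) (hw0 : wsum w0 = M)
    (hAg : CAg lam lam' 0 w0)
    (hV0 : lam.onV ⟨0, zero_le (a := M)⟩ = lam'.onV ⟨0, zero_le (a := M')⟩) :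
    (⟨M, lam⟩ : MorphOf E) = ⟨M', lam'⟩ := by
  subst hMM
  suffices hll : lam = lam' by rw [hll]
  have hE : lam.onE = lam'.onE := by
    funext e
    obtain ⟨⟨r, i⟩, hr⟩ := e
    have hw1 : wsum (wd r ++ i :: wd (M - (r + Pi.single i 1))) = M := by
      rw [wsum_append, wsum_cons, wsum_wd, wsum_wd]
      funext a
      have := hr a
      simp only [Pi.add_apply, Pi.sub_apply] at this ⊢
      omega
    have hperm : w0.Perm (wd r ++ i :: wd (M - (r + Pi.single i 1))) :=
      List.perm_iff_count.mpr fun a => by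
        rw [count_eq_wsum, count_eq_wsum, hw0, hw1]
    have hAg1 := (CAg_rtg hcomp hc hc' (perm_steps hperm) hw0 hAg).1
    have h2 := CAg_drop (wd r) 0 hAg1
    rw [wsum_wd, zero_add] at h2
    exact h2.1 hr hr
  have hV : lam.onV = lam'.onV := by
    funext x
    obtain ⟨v, hv⟩ := x
    by_cases hvM : v = M
    · subst hvM
      by_cases hM0 : v = 0
      · subst hM0; exact hV0
      · obtain ⟨i, hi⟩ : ∃ i, v i ≠ 0 := by
          by_contra hcon; push_neg at hcon; exact hM0 (funext hcon)
        have hsub : (v - Pi.single i 1) + Pi.single i 1 = v := by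
          funext a
          by_cases ha : a = i
          · subst ha
            simp only [Pi.add_apply, Pi.sub_apply, Pi.single_eq_same]
            omega
          · simp [Pi.single_apply, ha]
        have hedge : (v - Pi.single i 1) + Pi.single i 1 ≤ v := le_of_eq hsub
        have e1 := lam.s_comm ⟨(v - Pi.single i 1, i), hedge⟩
        have e2 := lam'.s_comm ⟨(v - Pi.single i 1, i), hedge⟩
        have g1 : lam.onV ⟨(v - Pi.single i 1) + Pi.single i 1, hedge⟩
            = E.s (lam.onE ⟨(v - Pi.single i 1, i), hedge⟩) := e1.symm
        have g2 : E.s (lam'.onE ⟨(v - Pi.single i 1, i), hedge⟩)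
            = lam'.onV ⟨(v - Pi.single i 1) + Pi.single i 1, hedge⟩ := e2
        rw [show (⟨v, hv⟩ : {n : Fin k → ℕ // n ≤ v}) =
          ⟨(v - Pi.single i 1) + Pi.single i 1, hedge⟩ from Subtype.ext hsub.symm]
        rw [g1, hE, g2]
    · obtain ⟨i, hi⟩ : ∃ i, v i ≠ M i := Function.ne_iff.mp hvM
      have hlt : v i < M i := lt_of_le_of_ne (hv i) hi
      have hedge : v + Pi.single i 1 ≤ M := by
        intro a
        by_cases ha : a = i
        · subst ha
          simp only [Pi.add_apply, Pi.single_eq_same]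
          omega
        · simp only [Pi.add_apply, Pi.single_apply, if_neg ha, add_zero]
          exact hv a
      have e1 := lam.r_comm ⟨(v, i), hedge⟩
      have e2 := lam'.r_comm ⟨(v, i), hedge⟩
      have g1 : lam.onV ⟨v, hv⟩ = E.r (lam.onE ⟨(v, i), hedge⟩) := e1.symm
      have g2 : E.r (lam'.onE ⟨(v, i), hedge⟩) = lam'.onV ⟨v, hv⟩ := e2
      rw [g1, hE, g2]
  exact CGM.ext' hV hE

lemma restrict_one {M m1 : Fin k → ℕ} {lam : CGM (grid k M) E} {σ : CGM (grid k m1) E}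
    {p1 pt : Fin k → ℕ} {h1 : p1 + m1 ≤ M}
    (e1 : restrictTo lam p1 m1 h1 = σ) (hpt : p1 = pt) :
    ∀ (r : Fin k → ℕ) (i : Fin k) (hr : r + Pi.single i 1 ≤ m1)
      (h : pt + r + Pi.single i 1 ≤ M), lam.onE ⟨(pt + r, i), h⟩ = σ.onE ⟨(r, i), hr⟩ := by
  subst hpt
  intro r i hr h
  have t1 := congrFun (congrArg CGM.onE e1) (⟨(r, i), hr⟩ : (grid k m1).E)
  exact t1

lemma restrict_chain {M m1 m2 : Fin k → ℕ} {lam : CGM (grid k M) E}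
    {σ : CGM (grid k m1) E} {τ : CGM (grid k m2) E}
    {p1 p2 pt : Fin k → ℕ} {h1 : p1 + m1 ≤ M} {h2 : p2 + m2 ≤ m1}
    (e1 : restrictTo lam p1 m1 h1 = σ) (e2 : restrictTo σ p2 m2 h2 = τ)
    (hpt : p1 + p2 = pt) :
    ∀ (r : Fin k → ℕ) (i : Fin k) (hr : r + Pi.single i 1 ≤ m2)
      (h : pt + r + Pi.single i 1 ≤ M), lam.onE ⟨(pt + r, i), h⟩ = τ.onE ⟨(r, i), hr⟩ := by
  subst hpt
  intro r i hr h
  have t1 := congrFun (congrArg CGM.onE e2) (⟨(r, i), hr⟩ : (grid k m2).E)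
  have pf2 : (p2 + r) + Pi.single i 1 ≤ m1 := by
    rw [add_assoc]
    exact le_trans (add_le_add le_rfl hr) h2
  have t2 := congrFun (congrArg CGM.onE e1) (⟨(p2 + r, i), pf2⟩ : (grid k m1).E)
  have t0 := onE_congr lam (a := ⟨(p1 + p2 + r, i), h⟩)
    (b := ⟨(p1 + (p2 + r), i), by rw [← add_assoc]; exact h⟩)
    (by show (p1 + p2 + r, i) = ((p1 + (p2 + r) : Fin k → ℕ), i); rw [add_assoc])
  exact t0.trans (t2.trans t1)

end Aux


/-- Composition of `C`-compatible coloured-graph morphisms (defined by unique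
extension) is associative: `(λμ)ν = λ(μν)`. Here `p = λμ`, `q = μν`,
`A = (λμ)ν` and `B = λ(μν)` are characterised by their restrictions. -/
theorem composition_associative {k : ℕ} {E : ColouredGraph k} {C : Set (MorphOf E)}
    (hC : Complete E C) (hA : Associative E C) {l m n : Fin k → ℕ}
    (lam : CGM (grid k l) E) (μ : CGM (grid k m) E) (ν : CGM (grid k n) E)
    (hlam : CComp E C lam) (hμ : CComp E C μ) (hν : CComp E C ν)
    (h1 : gSrc lam = gRng μ) (h2 : gSrc μ = gRng ν)
    (p : CGM (grid k (l + m)) E) (hp : CComp E C p)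
    (hp1 : restrictTo p 0 l (by rw [zero_add]; exact le_self_add) = lam)
    (hp2 : restrictTo p l m (le_refl (l + m)) = μ)
    (q : CGM (grid k (m + n)) E) (hq : CComp E C q)
    (hq1 : restrictTo q 0 m (by rw [zero_add]; exact le_self_add) = μ)
    (hq2 : restrictTo q m n (le_refl (m + n)) = ν)
    (A : CGM (grid k (l + m + n)) E) (hA' : CComp E C A)
    (hA1 : restrictTo A 0 (l + m) (by rw [zero_add]; exact le_self_add) = p)
    (hA2 : restrictTo A (l + m) n (le_refl (l + m + n)) = ν)
    (B : CGM (grid k (l + (m + n))) E) (hB : CComp E C B)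
    (hB1 : restrictTo B 0 l (by rw [zero_add]; exact le_self_add) = lam)
    (hB2 : restrictTo B l (m + n) (le_refl (l + (m + n))) = q) :
    (⟨l + m + n, A⟩ : MorphOf E) = ⟨l + (m + n), B⟩ := by
  apply morph_eq hC (add_assoc l m n) A B hA' hB (wd l ++ (wd m ++ wd n))
  · rw [wsum_append, wsum_append, wsum_wd, wsum_wd, wsum_wd, ← add_assoc]
  · -- CAg A B 0 (wd l ++ (wd m ++ wd n))
    refine CAg_append (wd l) 0 ?_ ?_
    · -- CAg A B 0 (wd l)
      exact CAg_of_rest (σ := lam) (pt := 0)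
        (restrict_chain hA1 hp1 rfl) (restrict_one hB1 rfl)
        (wd l) 0 (by rw [zero_add, wsum_wd])
    · rw [wsum_wd, zero_add]
      refine CAg_append (wd m) l ?_ ?_
      · -- CAg A B l (wd m)
        exact CAg_of_rest (σ := μ) (pt := l)
          (restrict_chain hA1 hp2 (zero_add l)) (restrict_chain hB2 hq1 rfl)
          (wd m) 0 (by rw [zero_add, wsum_wd])
      · rw [wsum_wd]
        -- CAg A B (l + m) (wd n)
        exact CAg_of_rest (σ := ν) (pt := l + m)
          (restrict_one hA2 rfl) (restrict_chain hB2 hq2 rfl)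
          (wd n) 0 (by rw [zero_add, wsum_wd])
  · -- vertex at 0
    have a1 := congrFun (congrArg CGM.onV hA1) ⟨0, zero_le⟩
    have a2 := congrFun (congrArg CGM.onV hp1) ⟨0, zero_le⟩
    have b1 := congrFun (congrArg CGM.onV hB1) ⟨0, zero_le⟩
    exact (a1.trans a2).trans b1.symm

end Paper
end

section
/- Let Λ be an aperiodic k-graph with no sources. For every vertex v ∈ Λ^0 and every l ∈ ℕ^k, there exists λ ∈ Λ with r(λ) = v and d(λ) ≥ l such that whenever α, β ∈ Λv are distinct paths with d(α), d(β) ≤ l, the initial segments of αλ and βλ of degree d(λ) are distinct: (αλ)(0, d(λ)) ≠ (βλ)(0, d(λ)). -/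
namespace Paper


/-- A `k`-graph structure on object type `Obj` and morphism type `Hom`:
a countable category with a degree functor to `ℕ^k` satisfying the
unique factorisation property.  `comp μ ν` is the composite "μ then ν",
meaningful when `src μ = rng ν`. -/
structure KGraph (k : ℕ) (Obj Hom : Type) where
  src : Hom → Obj
  rng : Hom → Obj
  comp : Hom → Hom → Hom
  idm : Obj → Hom
  d : Hom → Fin k → ℕ
  countObj : Countable Obj
  countHom : Countable Hom
  src_comp : ∀ μ ν, src μ = rng ν → src (comp μ ν) = src ν
  rng_comp : ∀ μ ν, src μ = rng ν → rng (comp μ ν) = rng μ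
  comp_assoc : ∀ l μ ν, src l = rng μ → src μ = rng ν →
    comp (comp l μ) ν = comp l (comp μ ν)
  src_idm : ∀ v, src (idm v) = v
  rng_idm : ∀ v, rng (idm v) = v
  comp_idm : ∀ μ, comp μ (idm (src μ)) = μ
  idm_comp : ∀ μ, comp (idm (rng μ)) μ = μ
  d_comp : ∀ μ ν, src μ = rng ν → d (comp μ ν) = d μ + d ν
  d_idm : ∀ v, d (idm v) = 0
  factor : ∀ (lam : Hom) (m n : Fin k → ℕ), d lam = m + n →
    ∃! p : Hom × Hom, src p.1 = rng p.2 ∧ comp p.1 p.2 = lam ∧ d p.1 = m ∧ d p.2 = n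

variable {k : ℕ} {Obj Hom : Type}

/-- `IsSegment Λ lam seg p q` says that `seg = lam(p,q)`, i.e. `seg` is the middle
factor of `lam` in a factorisation `lam = a ⬝ seg ⬝ b` with `d a = p`, `d seg = q - p`. -/
def IsSegment (Λ : KGraph k Obj Hom) (lam seg : Hom) (p q : Fin k → ℕ) : Prop :=
  ∃ a b : Hom, Λ.src a = Λ.rng seg ∧ Λ.src seg = Λ.rng b ∧
    Λ.comp a (Λ.comp seg b) = lam ∧ Λ.d a = p ∧ Λ.d seg = q - p

/-- Aperiodicity in the finite-path formulation of Robertson–Sims. -/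
def Aperiodic (Λ : KGraph k Obj Hom) : Prop :=
  ∀ (v : Obj) (m n : Fin k → ℕ), m ≠ n → ∃ lam : Hom,
    Λ.rng lam = v ∧ m ⊔ n ≤ Λ.d lam ∧
    ∀ s1 s2 : Hom, IsSegment Λ lam s1 m (m + (Λ.d lam - (m ⊔ n))) →
      IsSegment Λ lam s2 n (n + (Λ.d lam - (m ⊔ n))) → s1 ≠ s2

def NoSources (Λ : KGraph k Obj Hom) : Prop :=
  ∀ (v : Obj) (i : Fin k), ∃ h : Hom, Λ.rng h = v ∧ Λ.d h = Pi.single i 1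

def RowFinite (Λ : KGraph k Obj Hom) : Prop :=
  ∀ (v : Obj) (i : Fin k), {h : Hom | Λ.rng h = v ∧ Λ.d h = Pi.single i 1}.Finite

def Cofinal (Λ : KGraph k Obj Hom) : Prop :=
  ∀ v w : Obj, ∃ n : Fin k → ℕ, ∀ lam : Hom, Λ.rng lam = w → Λ.d lam = n →
    ∃ μ : Hom, Λ.rng μ = v ∧ Λ.src μ = Λ.src lam

/-- A degree-preserving functor between `k`-graphs. -/
structure KFunctor {O H O' H' : Type} (Λ : KGraph k O H) (Γ : KGraph k O' H') where
  onObj : O → O'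
  onHom : H → H'
  rng_comm : ∀ h, Γ.rng (onHom h) = onObj (Λ.rng h)
  src_comm : ∀ h, Γ.src (onHom h) = onObj (Λ.src h)
  idm_comm : ∀ v, onHom (Λ.idm v) = Γ.idm (onObj v)
  comp_comm : ∀ μ ν, Λ.src μ = Λ.rng ν → onHom (Λ.comp μ ν) = Γ.comp (onHom μ) (onHom ν)
  d_comm : ∀ h, Γ.d (onHom h) = Λ.d h

/-- An infinite path in a `k`-graph: a `k`-graph morphism from `Ω_k`. -/
structure InfPath (Λ : KGraph k Obj Hom) where
  vert : (Fin k → ℕ) → Obj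
  seg : ∀ p q : Fin k → ℕ, p ≤ q → Hom
  rng_seg : ∀ p q h, Λ.rng (seg p q h) = vert p
  src_seg : ∀ p q h, Λ.src (seg p q h) = vert q
  d_seg : ∀ p q h, Λ.d (seg p q h) = q - p
  comp_seg : ∀ p q r (h1 : p ≤ q) (h2 : q ≤ r),
    Λ.comp (seg p q h1) (seg q r h2) = seg p r (h1.trans h2)

/-- The shift `σ^p` on infinite paths. -/
def InfPath.shift (Λ : KGraph k Obj Hom) (p : Fin k → ℕ) (x : InfPath Λ) : InfPath Λ where
  vert q := x.vert (p + q)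
  seg q r h := x.seg (p + q) (p + r) (add_le_add le_rfl h)
  rng_seg q r h := x.rng_seg _ _ _
  src_seg q r h := x.src_seg _ _ _
  d_seg q r h := by
    rw [x.d_seg]
    funext i
    simp [Nat.add_sub_add_left]
  comp_seg q r t h1 h2 := x.comp_seg _ _ _ _ _


section Aux

variable (Λ : KGraph k Obj Hom)

/-- uniqueness of segments -/
lemma seg_unique {lam s1 s2 : Hom} {p q : Fin k → ℕ}
    (h1 : IsSegment Λ lam s1 p q) (h2 : IsSegment Λ lam s2 p q) : s1 = s2 := by
  obtain ⟨a1, b1, ha1, hb1, hc1, hd1, he1⟩ := h1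
  obtain ⟨a2, b2, ha2, hb2, hc2, hd2, he2⟩ := h2
  have hr1 : Λ.rng (Λ.comp s1 b1) = Λ.rng s1 := Λ.rng_comp _ _ hb1
  have hr2 : Λ.rng (Λ.comp s2 b2) = Λ.rng s2 := Λ.rng_comp _ _ hb2
  have hsa1 : Λ.src a1 = Λ.rng (Λ.comp s1 b1) := by rw [hr1]; exact ha1
  have hsa2 : Λ.src a2 = Λ.rng (Λ.comp s2 b2) := by rw [hr2]; exact ha2
  have hdl : Λ.d lam = p + Λ.d (Λ.comp s1 b1) := by
    rw [← hc1, Λ.d_comp _ _ hsa1, hd1]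
  have hdl2 : Λ.d lam = p + Λ.d (Λ.comp s2 b2) := by
    rw [← hc2, Λ.d_comp _ _ hsa2, hd2]
  have hdd : Λ.d (Λ.comp s2 b2) = Λ.d (Λ.comp s1 b1) :=
    add_left_cancel (hdl2.symm.trans hdl)
  obtain ⟨P, _, hPu⟩ := Λ.factor lam p (Λ.d (Λ.comp s1 b1)) hdl
  have e1 : ((a1, Λ.comp s1 b1) : Hom × Hom) = P := hPu _ ⟨hsa1, hc1, hd1, rfl⟩
  have e2 : ((a2, Λ.comp s2 b2) : Hom × Hom) = P := hPu _ ⟨hsa2, hc2, hd2, hdd⟩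
  have hX : Λ.comp s1 b1 = Λ.comp s2 b2 := by
    have := e1.trans e2.symm
    exact (congrArg Prod.snd this)
  -- second stage
  have hds : Λ.d s2 = Λ.d s1 := he2.trans he1.symm
  have hdX : Λ.d (Λ.comp s1 b1) = Λ.d s1 + Λ.d b1 := Λ.d_comp _ _ hb1
  have hdX2 : Λ.d (Λ.comp s2 b2) = Λ.d s2 + Λ.d b2 := Λ.d_comp _ _ hb2
  have hdb : Λ.d b2 = Λ.d b1 := by
    have : Λ.d s1 + Λ.d b2 = Λ.d s1 + Λ.d b1 := by
      rw [← hds] at hdX ⊢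
      rw [← hdX2, ← hdX, hX]
    exact add_left_cancel this
  obtain ⟨Q, _, hQu⟩ := Λ.factor (Λ.comp s1 b1) (Λ.d s1) (Λ.d b1) hdX
  have f1 : ((s1, b1) : Hom × Hom) = Q := hQu _ ⟨hb1, rfl, rfl, rfl⟩
  have f2 : ((s2, b2) : Hom × Hom) = Q := hQu _ ⟨hb2, hX.symm, hds, hdb⟩
  exact congrArg Prod.fst (f1.trans f2.symm)

/-- existence of segments -/
lemma seg_exists {lam : Hom} {p q : Fin k → ℕ} (hpq : p ≤ q) (hq : q ≤ Λ.d lam) :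
    ∃ s : Hom, IsSegment Λ lam s p q := by
  have h1 : Λ.d lam = p + (Λ.d lam - p) := by
    funext i; have h1i : p i ≤ q i := hpq i; have h2i : p i ≤ Λ.d lam i := le_trans (hpq i) (hq i); have h3i : q i ≤ Λ.d lam i := hq i; simp only [Pi.add_apply, Pi.sub_apply]; omega
  obtain ⟨⟨a, rest⟩, ⟨hsr, hcomp, hda, hdr⟩, _⟩ := Λ.factor lam p (Λ.d lam - p) h1
  have h2 : Λ.d rest = (q - p) + (Λ.d lam - q) := by
    rw [hdr]; funext i; have h1i : p i ≤ q i := hpq i; have h2i : p i ≤ Λ.d lam i := le_trans (hpq i) (hq i); have h3i : q i ≤ Λ.d lam i := hq i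
    simp only [Pi.add_apply, Pi.sub_apply]; omega
  obtain ⟨⟨s, b⟩, ⟨hsb, hcomp2, hds, hdb⟩, _⟩ := Λ.factor rest (q - p) (Λ.d lam - q) h2
  refine ⟨s, a, b, ?_, hsb, ?_, hda, hds⟩
  · rw [hsr, ← hcomp2, Λ.rng_comp _ _ hsb]
  · rw [hcomp2, hcomp]

/-- a segment of the left factor is a segment -/
lemma seg_comp_left {x y lam s : Hom} {p q : Fin k → ℕ}
    (hxy : Λ.src x = Λ.rng y) (hc : Λ.comp x y = lam)
    (h : IsSegment Λ x s p q) : IsSegment Λ lam s p q := by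
  obtain ⟨a, b, ha, hb, hcx, hda, hds⟩ := h
  have hsb : Λ.src s = Λ.rng (Λ.comp b y) := by
    rw [Λ.rng_comp b y ?_, hb]
    · rw [← hcx] at hxy
      rw [Λ.src_comp _ _ ?_] at hxy
      · rw [Λ.src_comp _ _ hb] at hxy; exact hxy
      · rw [Λ.rng_comp _ _ hb]; exact ha
  refine ⟨a, Λ.comp b y, ha, hsb, ?_, hda, hds⟩
  have hby : Λ.src b = Λ.rng y := by
    rw [← hcx] at hxy
    rw [Λ.src_comp _ _ (by rw [Λ.rng_comp _ _ hb]; exact ha)] at hxy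
    rw [Λ.src_comp _ _ hb] at hxy; exact hxy
  rw [← hc, ← hcx]
  rw [Λ.comp_assoc a (Λ.comp s b) y (by rw [Λ.rng_comp _ _ hb]; exact ha)
      (by rw [Λ.src_comp _ _ hb]; exact hby)]
  rw [Λ.comp_assoc s b y hb hby]

/-- a segment of the right factor is a segment, with shifted indices -/
lemma seg_comp_right {x y lam s : Hom} {p q : Fin k → ℕ}
    (hxy : Λ.src x = Λ.rng y) (hc : Λ.comp x y = lam)
    (h : IsSegment Λ y s p q) : IsSegment Λ lam s (Λ.d x + p) (Λ.d x + q) := by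
  obtain ⟨a, b, ha, hb, hcy, hda, hds⟩ := h
  have hra : Λ.rng (Λ.comp a (Λ.comp s b)) = Λ.rng a :=
    Λ.rng_comp _ _ (by rw [Λ.rng_comp _ _ hb]; exact ha)
  have hxa : Λ.src x = Λ.rng a := by rw [hxy, ← hcy, hra]
  refine ⟨Λ.comp x a, b, ?_, hb, ?_, ?_, ?_⟩
  · rw [Λ.src_comp _ _ hxa]; exact ha
  · rw [← hc, ← hcy, Λ.comp_assoc x a (Λ.comp s b) hxa
      (by rw [Λ.rng_comp _ _ hb]; exact ha)]
  · rw [Λ.d_comp _ _ hxa, hda]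
  · rw [hds]; funext i; simp only [Pi.add_apply, Pi.sub_apply]; omega

/-- segment of a segment -/
lemma seg_trans {lam s t : Hom} {p q p' q' : Fin k → ℕ}
    (h1 : IsSegment Λ lam s p q) (h2 : IsSegment Λ s t p' q') :
    IsSegment Λ lam t (p + p') (p + q') := by
  obtain ⟨a, b, ha, hb, hcl, hda, _⟩ := h1
  obtain ⟨a', b', ha', hb', hcs, hda', hds'⟩ := h2
  have hrs : Λ.rng s = Λ.rng a' := by
    rw [← hcs, Λ.rng_comp _ _ (by rw [Λ.rng_comp _ _ hb']; exact ha')]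
  have hss : Λ.src s = Λ.src b' := by
    rw [← hcs, Λ.src_comp _ _ (by rw [Λ.rng_comp _ _ hb']; exact ha'),
      Λ.src_comp _ _ hb']
  have haa' : Λ.src a = Λ.rng a' := by rw [ha, hrs]
  have hb'b : Λ.src b' = Λ.rng b := by rw [← hss, hb]
  refine ⟨Λ.comp a a', Λ.comp b' b, ?_, ?_, ?_, ?_, ?_⟩
  · rw [Λ.src_comp _ _ haa']; exact ha'
  · rw [Λ.rng_comp _ _ hb'b]; exact hb'
  · rw [← hcl, ← hcs]
    rw [Λ.comp_assoc a a' (Λ.comp t (Λ.comp b' b)) haa'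
      (by rw [Λ.rng_comp _ _ (by rw [Λ.rng_comp _ _ hb'b]; exact hb')]; exact ha')]
    congr 1
    rw [← Λ.comp_assoc t b' b hb' hb'b]
    rw [Λ.comp_assoc a' (Λ.comp t b') b (by rw [Λ.rng_comp _ _ hb']; exact ha')
      (by rw [Λ.src_comp _ _ hb']; exact hb'b)]
  · rw [Λ.d_comp _ _ haa', hda, hda']
  · rw [hds']; funext i; simp only [Pi.add_apply, Pi.sub_apply]; omega


lemma reach (hNS : NoSources Λ) (n : Fin k → ℕ) (w : Obj) :
    ∃ h : Hom, Λ.rng h = w ∧ Λ.d h = n := by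
  suffices H : ∀ (N : ℕ) (n : Fin k → ℕ) (w : Obj), (∑ i, n i) = N →
      ∃ h : Hom, Λ.rng h = w ∧ Λ.d h = n from H _ n w rfl
  intro N
  induction N using Nat.strong_induction_on with
  | _ N ih =>
    intro n w hsum
    by_cases h0 : n = 0
    · exact ⟨Λ.idm w, Λ.rng_idm w, by rw [Λ.d_idm, h0]⟩
    · have hex : ∃ i, 0 < n i := by
        by_contra hc
        push_neg at hc
        exact h0 (funext fun i => Nat.le_zero.mp (hc i))
      obtain ⟨i, hi⟩ := hex
      obtain ⟨e, hre, hde⟩ := hNS w i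
      have hlt : (∑ j, ((n - Pi.single i 1 : Fin k → ℕ)) j) < N := by
        rw [← hsum]
        apply Finset.sum_lt_sum (fun j _ => by simp [Pi.sub_apply])
        exact ⟨i, Finset.mem_univ i, by simp [Pi.sub_apply, Pi.single_apply]; omega⟩
      obtain ⟨h', hrh', hdh'⟩ := ih _ hlt (n - Pi.single i 1) (Λ.src e) rfl
      have hse : Λ.src e = Λ.rng h' := hrh'.symm
      refine ⟨Λ.comp e h', ?_, ?_⟩
      · rw [Λ.rng_comp _ _ hse, hre]
      · rw [Λ.d_comp _ _ hse, hde, hdh']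
        funext j
        simp only [Pi.add_apply, Pi.sub_apply, Pi.single_apply]
        by_cases hj : j = i
        · subst hj; simp; omega
        · simp [hj]

lemma build (hAp : Aperiodic Λ) (hNS : NoSources Λ) (l : Fin k → ℕ)
    (L : List ((Fin k → ℕ) × (Fin k → ℕ))) (w : Obj) :
    ∃ lam : Hom, Λ.rng lam = w ∧ l ≤ Λ.d lam ∧
      ∀ mn ∈ L, mn.1 ≠ mn.2 →
        ∃ A lami B : Hom, Λ.src A = Λ.rng lami ∧ Λ.src lami = Λ.rng B ∧
          lam = Λ.comp A (Λ.comp lami B) ∧ l ≤ Λ.d B ∧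
          mn.1 ⊔ mn.2 ≤ Λ.d lami ∧
          ∀ s1 s2 : Hom,
            IsSegment Λ lami s1 mn.1 (mn.1 + (Λ.d lami - (mn.1 ⊔ mn.2))) →
            IsSegment Λ lami s2 mn.2 (mn.2 + (Λ.d lami - (mn.1 ⊔ mn.2))) → s1 ≠ s2 := by
  induction L generalizing w with
  | nil =>
    obtain ⟨tail, hrt, hdt⟩ := reach Λ hNS l w
    exact ⟨tail, hrt, le_of_eq hdt.symm, by simp⟩
  | cons mn rest ihL =>
    by_cases hmn : mn.1 = mn.2
    · obtain ⟨lam, h1, h2, h3⟩ := ihL w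
      refine ⟨lam, h1, h2, ?_⟩
      intro x hx hne
      rcases List.mem_cons.mp hx with hx | hx
      · subst hx; exact absurd hmn hne
      · exact h3 x hx hne
    · obtain ⟨lami, hrl, hsup, hsep⟩ := hAp w mn.1 mn.2 hmn
      obtain ⟨lam', hrl', hll', h3⟩ := ihL (Λ.src lami)
      have hsl : Λ.src lami = Λ.rng lam' := hrl'.symm
      refine ⟨Λ.comp lami lam', ?_, ?_, ?_⟩
      · rw [Λ.rng_comp _ _ hsl, hrl]
      · rw [Λ.d_comp _ _ hsl]
        intro i
        calc l i ≤ Λ.d lam' i := hll' i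
        _ ≤ Λ.d lami i + Λ.d lam' i := Nat.le_add_left _ _
      · intro x hx hne
        rcases List.mem_cons.mp hx with hx | hx
        · subst hx
          refine ⟨Λ.idm w, lami, lam', ?_, hsl, ?_, hll', hsup, hsep⟩
          · rw [Λ.src_idm, hrl]
          · have : Λ.rng (Λ.comp lami lam') = w := by rw [Λ.rng_comp _ _ hsl, hrl]
            rw [← this, Λ.idm_comp]
        · obtain ⟨A, li, B, hA, hli, hdec, hlB, hs, hsepx⟩ := h3 x hx hne
          have hrA : Λ.rng lam' = Λ.rng A := by
            rw [hdec, Λ.rng_comp _ _ (by rw [Λ.rng_comp _ _ hli]; exact hA)]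
          have hslA : Λ.src lami = Λ.rng A := by rw [hsl, hrA]
          refine ⟨Λ.comp lami A, li, B, ?_, hli, ?_, hlB, hs, hsepx⟩
          · rw [Λ.src_comp _ _ hslA]; exact hA
          · rw [hdec, ← Λ.comp_assoc lami A (Λ.comp li B) hslA
              (by rw [Λ.rng_comp _ _ hli]; exact hA)]


lemma peel {lam α τ : Hom} {v : Obj} (hrl : Λ.rng lam = v) (hsα : Λ.src α = v)
    (hm : Λ.d α ≤ Λ.d lam)
    (hseg : IsSegment Λ (Λ.comp α lam) τ 0 (Λ.d lam)) :
    ∃ e b : Hom, Λ.src α = Λ.rng e ∧ Λ.src e = Λ.rng b ∧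
      τ = Λ.comp α e ∧ lam = Λ.comp e b ∧ Λ.d e = Λ.d lam - Λ.d α ∧
      Λ.d τ = Λ.d lam := by
  have hsrc : Λ.src α = Λ.rng lam := by rw [hsα, hrl]
  obtain ⟨a, b0, ha, hb0, hc, hd0, he⟩ := hseg
  have hdτ : Λ.d τ = Λ.d lam := by rw [he]; funext i; simp
  have h1 : Λ.src a = Λ.rng (Λ.comp τ b0) := by rw [Λ.rng_comp _ _ hb0]; exact ha
  have hdsum : Λ.d (Λ.comp α lam) = 0 + Λ.d (Λ.comp τ b0) := by
    rw [← hc, Λ.d_comp _ _ h1, hd0]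
  obtain ⟨P, _, hPu⟩ := Λ.factor (Λ.comp α lam) 0 (Λ.d (Λ.comp τ b0)) hdsum
  have e1 := hPu (a, Λ.comp τ b0) ⟨h1, hc, hd0, rfl⟩
  have e2 := hPu (Λ.idm (Λ.rng (Λ.comp α lam)), Λ.comp α lam)
    ⟨by rw [Λ.src_idm], Λ.idm_comp _, Λ.d_idm _, by rw [hdsum, zero_add]⟩
  have htab : Λ.comp τ b0 = Λ.comp α lam := congrArg Prod.snd (e1.trans e2.symm)
  -- factor τ at d α
  have hτm : Λ.d τ = Λ.d α + (Λ.d lam - Λ.d α) := by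
    rw [hdτ]; funext i
    have hmi : Λ.d α i ≤ Λ.d lam i := hm i
    simp only [Pi.add_apply, Pi.sub_apply]; omega
  obtain ⟨⟨c, e⟩, ⟨hce, hcτ, hdc, hde⟩, _⟩ := Λ.factor τ (Λ.d α) (Λ.d lam - Λ.d α) hτm
  have hsτ : Λ.src τ = Λ.src e := by rw [← hcτ, Λ.src_comp _ _ hce]
  have heb : Λ.src e = Λ.rng b0 := by rw [← hsτ]; exact hb0
  have hassoc : Λ.comp c (Λ.comp e b0) = Λ.comp α lam := by
    rw [← Λ.comp_assoc c e b0 hce heb, hcτ, htab]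
  have hsum2 : Λ.d (Λ.comp α lam) = Λ.d α + Λ.d lam := Λ.d_comp α lam hsrc
  obtain ⟨Q, _, hQu⟩ := Λ.factor (Λ.comp α lam) (Λ.d α) (Λ.d lam) hsum2
  have f1 := hQu (α, lam) ⟨hsrc, rfl, rfl, rfl⟩
  have hceb : Λ.src c = Λ.rng (Λ.comp e b0) := by rw [Λ.rng_comp _ _ heb]; exact hce
  have hdeb : Λ.d (Λ.comp e b0) = Λ.d lam := by
    have h5 : Λ.d (Λ.comp α lam) = Λ.d α + Λ.d (Λ.comp e b0) := by
      rw [← hassoc, Λ.d_comp _ _ hceb, hdc]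
    exact (add_left_cancel (hsum2.symm.trans h5)).symm
  have f2 := hQu (c, Λ.comp e b0) ⟨hceb, hassoc, hdc, hdeb⟩
  have hpair := f1.trans f2.symm
  have hαc : α = c := congrArg Prod.fst hpair
  have hlam : lam = Λ.comp e b0 := congrArg Prod.snd hpair
  refine ⟨e, b0, ?_, heb, ?_, hlam, hde, hdτ⟩
  · rw [hαc]; exact hce
  · rw [hαc]; exact hcτ.symm


theorem exists_separating_path' (hAp : Aperiodic Λ) (hNS : NoSources Λ)
    (v : Obj) (l : Fin k → ℕ) :
    ∃ lam : Hom, Λ.rng lam = v ∧ l ≤ Λ.d lam ∧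
      ∀ α β : Hom, Λ.src α = v → Λ.src β = v →
        Λ.d α ≤ l → Λ.d β ≤ l → α ≠ β →
        ∀ iniA iniB : Hom,
          IsSegment Λ (Λ.comp α lam) iniA 0 (Λ.d lam) →
          IsSegment Λ (Λ.comp β lam) iniB 0 (Λ.d lam) →
          iniA ≠ iniB := by
  classical
  obtain ⟨lam, hrlam, hllam, hprop⟩ :=
    build Λ hAp hNS l ((Finset.Iic l ×ˢ Finset.Iic l).toList) v
  refine ⟨lam, hrlam, hllam, ?_⟩
  intro α β hsα hsβ hdα hdβ hne iniA iniB hA hB heq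
  rw [← heq] at hB
  have hml : Λ.d α ≤ Λ.d lam := le_trans hdα hllam
  have hnl : Λ.d β ≤ Λ.d lam := le_trans hdβ hllam
  obtain ⟨eA, bA, hAe, hAeb, hτA, hlamA, hdeA, hdτ⟩ := peel Λ hrlam hsα hml hA
  obtain ⟨eB, bB, hBe, hBeb, hτB, hlamB, hdeB, -⟩ := peel Λ hrlam hsβ hnl hB
  by_cases hmn : Λ.d α = Λ.d β
  · -- equal degrees: α = β, contradiction
    have hτsum : Λ.d iniA = Λ.d α + (Λ.d lam - Λ.d α) := by
      rw [hdτ]; funext i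
      have hmi : Λ.d α i ≤ Λ.d lam i := hml i
      simp only [Pi.add_apply, Pi.sub_apply]; omega
    obtain ⟨R, -, hRu⟩ := Λ.factor iniA (Λ.d α) (Λ.d lam - Λ.d α) hτsum
    have g1 := hRu (α, eA) ⟨hAe, hτA.symm, rfl, hdeA⟩
    have g2 := hRu (β, eB) ⟨hBe, hτB.symm, hmn.symm, by rw [hdeB, hmn]⟩
    exact hne (congrArg Prod.fst (g1.trans g2.symm))
  · -- distinct degrees
    have hmx : Λ.d α ⊔ Λ.d β ≤ Λ.d lam := le_trans (sup_le hdα hdβ) hllam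
    -- factor eA at ((α⊔β) - α, p) where p = d lam - (α ⊔ β)
    have hdeA' : Λ.d eA = (Λ.d α ⊔ Λ.d β - Λ.d α) + (Λ.d lam - (Λ.d α ⊔ Λ.d β)) := by
      rw [hdeA]; funext i
      have h1 : (Λ.d α ⊔ Λ.d β) i ≤ Λ.d lam i := hmx i
      simp only [Pi.add_apply, Pi.sub_apply, Pi.sup_apply] at h1 ⊢
      omega
    have hdeB' : Λ.d eB = (Λ.d α ⊔ Λ.d β - Λ.d β) + (Λ.d lam - (Λ.d α ⊔ Λ.d β)) := by
      rw [hdeB]; funext i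
      have h1 : (Λ.d α ⊔ Λ.d β) i ≤ Λ.d lam i := hmx i
      simp only [Pi.add_apply, Pi.sub_apply, Pi.sup_apply] at h1 ⊢
      omega
    obtain ⟨⟨fA, gA⟩, ⟨hfgA, hcfgA, hdfA, hdgA⟩, -⟩ :=
      Λ.factor eA (Λ.d α ⊔ Λ.d β - Λ.d α) (Λ.d lam - (Λ.d α ⊔ Λ.d β)) hdeA'
    obtain ⟨⟨fB, gB⟩, ⟨hfgB, hcfgB, hdfB, hdgB⟩, -⟩ :=
      Λ.factor eB (Λ.d α ⊔ Λ.d β - Λ.d β) (Λ.d lam - (Λ.d α ⊔ Λ.d β)) hdeB'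
    have hrfA : Λ.src α = Λ.rng fA := by rw [hAe, ← hcfgA, Λ.rng_comp _ _ hfgA]
    have hrfB : Λ.src β = Λ.rng fB := by rw [hBe, ← hcfgB, Λ.rng_comp _ _ hfgB]
    have hassocA : Λ.comp (Λ.comp α fA) gA = iniA := by
      rw [Λ.comp_assoc α fA gA hrfA hfgA, hcfgA]; exact hτA.symm
    have hassocB : Λ.comp (Λ.comp β fB) gB = iniA := by
      rw [Λ.comp_assoc β fB gB hrfB hfgB, hcfgB]; exact hτB.symm
    have hτmx : Λ.d iniA = (Λ.d α ⊔ Λ.d β) + (Λ.d lam - (Λ.d α ⊔ Λ.d β)) := by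
      rw [hdτ]; funext i
      have h1 : (Λ.d α ⊔ Λ.d β) i ≤ Λ.d lam i := hmx i
      simp only [Pi.add_apply, Pi.sub_apply, Pi.sup_apply] at h1 ⊢
      omega
    obtain ⟨S, -, hSu⟩ :=
      Λ.factor iniA (Λ.d α ⊔ Λ.d β) (Λ.d lam - (Λ.d α ⊔ Λ.d β)) hτmx
    have hdαfA : Λ.d (Λ.comp α fA) = Λ.d α ⊔ Λ.d β := by
      rw [Λ.d_comp _ _ hrfA, hdfA]; funext i
      simp only [Pi.add_apply, Pi.sub_apply, Pi.sup_apply]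
      omega
    have hdβfB : Λ.d (Λ.comp β fB) = Λ.d α ⊔ Λ.d β := by
      rw [Λ.d_comp _ _ hrfB, hdfB]; funext i
      simp only [Pi.add_apply, Pi.sub_apply, Pi.sup_apply]
      omega
    have u1 := hSu (Λ.comp α fA, gA)
      ⟨by rw [Λ.src_comp _ _ hrfA]; exact hfgA, hassocA, hdαfA, hdgA⟩
    have u2 := hSu (Λ.comp β fB, gB)
      ⟨by rw [Λ.src_comp _ _ hrfB]; exact hfgB, hassocB, hdβfB, hdgB⟩
    have hg : gA = gB := congrArg Prod.snd (u1.trans u2.symm)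
    -- gA is a segment of lam at (m', m'+p) and at (n', n'+p)
    have hsgA : Λ.src gA = Λ.rng bA := by
      have h2 : Λ.src eA = Λ.src gA := by rw [← hcfgA, Λ.src_comp _ _ hfgA]
      rw [← h2]; exact hAeb
    have hsgB : Λ.src gB = Λ.rng bB := by
      have h2 : Λ.src eB = Λ.src gB := by rw [← hcfgB, Λ.src_comp _ _ hfgB]
      rw [← h2]; exact hBeb
    have hsegA : IsSegment Λ lam gA (Λ.d α ⊔ Λ.d β - Λ.d α)
        ((Λ.d α ⊔ Λ.d β - Λ.d α) + (Λ.d lam - (Λ.d α ⊔ Λ.d β))) := by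
      refine ⟨fA, bA, hfgA, hsgA, ?_, hdfA, ?_⟩
      · rw [← Λ.comp_assoc fA gA bA hfgA hsgA, hcfgA]; exact hlamA.symm
      · rw [hdgA]; funext i; simp only [Pi.add_apply, Pi.sub_apply]; omega
    have hsegB : IsSegment Λ lam gA (Λ.d α ⊔ Λ.d β - Λ.d β)
        ((Λ.d α ⊔ Λ.d β - Λ.d β) + (Λ.d lam - (Λ.d α ⊔ Λ.d β))) := by
      rw [hg]
      refine ⟨fB, bB, hfgB, hsgB, ?_, hdfB, ?_⟩
      · rw [← Λ.comp_assoc fB gB bB hfgB hsgB, hcfgB]; exact hlamB.symm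
      · rw [hdgB]; funext i; simp only [Pi.add_apply, Pi.sub_apply]; omega
    -- look up the pair (m', n') in the list
    have hm'l : Λ.d α ⊔ Λ.d β - Λ.d α ≤ l := by
      intro i
      have h1 : Λ.d β i ≤ l i := hdβ i
      simp only [Pi.sub_apply, Pi.sup_apply]
      omega
    have hn'l : Λ.d α ⊔ Λ.d β - Λ.d β ≤ l := by
      intro i
      have h1 : Λ.d α i ≤ l i := hdα i
      simp only [Pi.sub_apply, Pi.sup_apply]
      omega
    have hmem : ((Λ.d α ⊔ Λ.d β - Λ.d α, Λ.d α ⊔ Λ.d β - Λ.d β) :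
        (Fin k → ℕ) × (Fin k → ℕ)) ∈ (Finset.Iic l ×ˢ Finset.Iic l).toList :=
      Finset.mem_toList.mpr (Finset.mem_product.mpr
        ⟨Finset.mem_Iic.mpr hm'l, Finset.mem_Iic.mpr hn'l⟩)
    have hm'n' : Λ.d α ⊔ Λ.d β - Λ.d α ≠ Λ.d α ⊔ Λ.d β - Λ.d β := by
      intro h
      apply hmn
      funext i
      have hh := congrFun h i
      simp only [Pi.sub_apply, Pi.sup_apply] at hh
      omega
    obtain ⟨A, li, B, hsA, hsli, hdecomp, hlB, hsupli, hsep⟩ :=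
      hprop _ hmem hm'n'
    simp only at hsA hsli hdecomp hlB hsupli hsep
    -- abbreviations
    set m' := Λ.d α ⊔ Λ.d β - Λ.d α with hm'def
    set n' := Λ.d α ⊔ Λ.d β - Λ.d β with hn'def
    set p := Λ.d lam - (Λ.d α ⊔ Λ.d β) with hpdef
    set q := Λ.d li - (m' ⊔ n') with hqdef
    -- segments of li
    have hm'q : m' + q ≤ Λ.d li := by
      intro i
      have h1 : (m' ⊔ n') i ≤ Λ.d li i := hsupli i
      simp only [hqdef, Pi.add_apply, Pi.sub_apply, Pi.sup_apply] at h1 ⊢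
      omega
    have hn'q : n' + q ≤ Λ.d li := by
      intro i
      have h1 : (m' ⊔ n') i ≤ Λ.d li i := hsupli i
      simp only [hqdef, Pi.add_apply, Pi.sub_apply, Pi.sup_apply] at h1 ⊢
      omega
    obtain ⟨s1, hs1⟩ := seg_exists Λ (le_add_of_nonneg_right (show 0 ≤ q from zero_le)) hm'q
    obtain ⟨s2, hs2⟩ := seg_exists Λ (le_add_of_nonneg_right (show 0 ≤ q from zero_le)) hn'q
    -- lift the li-segments to lam
    have hcompliB : Λ.src A = Λ.rng (Λ.comp li B) := by
      rw [Λ.rng_comp _ _ hsli]; exact hsA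
    have hlift1 : IsSegment Λ lam s1 (Λ.d A + m') (Λ.d A + (m' + q)) :=
      seg_comp_right Λ hcompliB hdecomp.symm (seg_comp_left Λ hsli rfl hs1)
    have hlift2 : IsSegment Λ lam s2 (Λ.d A + n') (Λ.d A + (n' + q)) :=
      seg_comp_right Λ hcompliB hdecomp.symm (seg_comp_left Λ hsli rfl hs2)
    -- the common middle δ of gA
    have hdlam : Λ.d lam = Λ.d A + (Λ.d li + Λ.d B) := by
      rw [hdecomp, Λ.d_comp _ _ hcompliB, Λ.d_comp _ _ hsli]
    have hdgAp : Λ.d gA = p := hdgA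
    have hAq : Λ.d A + q ≤ Λ.d gA := by
      rw [hdgAp]
      intro i
      have h1 : (Λ.d α ⊔ Λ.d β) i ≤ l i := (sup_le hdα hdβ) i
      have h2 : l i ≤ Λ.d B i := hlB i
      have h3 : Λ.d lam i = Λ.d A i + (Λ.d li i + Λ.d B i) := congrFun hdlam i
      simp only [hqdef, hpdef, Pi.add_apply, Pi.sub_apply, Pi.sup_apply] at h1 h3 ⊢
      omega
    obtain ⟨dl, hdl⟩ := seg_exists Λ (le_add_of_nonneg_right (show 0 ≤ q from zero_le)) hAq
    have hd1 : IsSegment Λ lam dl (m' + Λ.d A) (m' + (Λ.d A + q)) :=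
      seg_trans Λ hsegA hdl
    have hd2 : IsSegment Λ lam dl (n' + Λ.d A) (n' + (Λ.d A + q)) :=
      seg_trans Λ hsegB hdl
    have hi1 : m' + Λ.d A = Λ.d A + m' := add_comm _ _
    have hi2 : m' + (Λ.d A + q) = Λ.d A + (m' + q) := by ring
    have hi3 : n' + Λ.d A = Λ.d A + n' := add_comm _ _
    have hi4 : n' + (Λ.d A + q) = Λ.d A + (n' + q) := by ring
    rw [hi1, hi2] at hd1
    rw [hi3, hi4] at hd2
    have hs1dl : s1 = dl := seg_unique Λ hlift1 hd1
    have hs2dl : s2 = dl := seg_unique Λ hlift2 hd2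
    exact hsep s1 s2 hs1 hs2 (hs1dl.trans hs2dl.symm)


end Aux

/-- In an aperiodic `k`-graph with no sources: for every vertex `v` and
`l ∈ ℕ^k` there is `λ ∈ vΛ` with `d(λ) ≥ l` such that distinct `α, β ∈ Λv`
with `d(α), d(β) ≤ l` have distinct initial segments `(αλ)(0,d(λ))` and
`(βλ)(0,d(λ))`. -/
theorem exists_separating_path {k : ℕ} {Obj Hom : Type} (Λ : KGraph k Obj Hom)
    (hAp : Aperiodic Λ) (hNS : NoSources Λ) (v : Obj) (l : Fin k → ℕ) :
    ∃ lam : Hom, Λ.rng lam = v ∧ l ≤ Λ.d lam ∧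
      ∀ α β : Hom, Λ.src α = v → Λ.src β = v →
        Λ.d α ≤ l → Λ.d β ≤ l → α ≠ β →
        ∀ iniA iniB : Hom,
          IsSegment Λ (Λ.comp α lam) iniA 0 (Λ.d lam) →
          IsSegment Λ (Λ.comp β lam) iniB 0 (Λ.d lam) →
          iniA ≠ iniB :=
  exists_separating_path' Λ hAp hNS v l

end Paper
end

section
/- Let Λ be a row-finite k-graph with no sources which is not cofinal. Then there exist a vertex v ∈ Λ^0 and an infinite path x ∈ Λ^∞ such that vΛx(n) = ∅ for all n ∈ ℕ^k, i.e., no finite path leads from any vertex on x to v. -/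
namespace Paper


variable {k : ℕ} {Obj Hom : Type}

section Aux

variable {k : ℕ} {Obj Hom : Type}

lemma KGraph.eq_idm (Λ : KGraph k Obj Hom) (lam : Hom) (h : Λ.d lam = 0) :
    lam = Λ.idm (Λ.rng lam) := by
  have hf := Λ.factor lam 0 0 (by simpa using h)
  have h1 : Λ.src (Λ.idm (Λ.rng lam)) = Λ.rng lam ∧
      Λ.comp (Λ.idm (Λ.rng lam)) lam = lam ∧ Λ.d (Λ.idm (Λ.rng lam)) = 0 ∧ Λ.d lam = 0 :=
    ⟨Λ.src_idm _, Λ.idm_comp _, Λ.d_idm _, h⟩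
  have h2 : Λ.src lam = Λ.rng (Λ.idm (Λ.src lam)) ∧
      Λ.comp lam (Λ.idm (Λ.src lam)) = lam ∧ Λ.d lam = 0 ∧ Λ.d (Λ.idm (Λ.src lam)) = 0 :=
    ⟨(Λ.rng_idm _).symm, Λ.comp_idm _, h, Λ.d_idm _⟩
  have := hf.unique (y₁ := (Λ.idm (Λ.rng lam), lam)) (y₂ := (lam, Λ.idm (Λ.src lam))) h1 h2
  exact (congrArg Prod.fst this).symm

/-- `s` is the segment of `lam` from `p` to `q` (with the residual degree recorded). -/
def Mid (Λ : KGraph k Obj Hom) (lam s : Hom) (p q : Fin k → ℕ) : Prop :=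
  ∃ a b : Hom, Λ.src a = Λ.rng s ∧ Λ.src s = Λ.rng b ∧
    Λ.comp a (Λ.comp s b) = lam ∧ Λ.d a = p ∧ Λ.d s = q - p ∧ Λ.d b = Λ.d lam - q

lemma mid_d (Λ : KGraph k Obj Hom) {lam s : Hom} {p q : Fin k → ℕ}
    (h : Mid Λ lam s p q) : Λ.d s = q - p := by
  obtain ⟨a, b, -, -, -, -, h5, -⟩ := h; exact h5

lemma mid_tail (Λ : KGraph k Obj Hom) {lam s : Hom} {p q : Fin k → ℕ}
    (h : Mid Λ lam s p q) : ∃ b, Λ.src s = Λ.rng b ∧ Λ.src b = Λ.src lam := by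
  obtain ⟨a, b, h1, h2, h3, -, -, -⟩ := h
  refine ⟨b, h2, ?_⟩
  have hsb : Λ.rng (Λ.comp s b) = Λ.rng s := Λ.rng_comp s b h2
  rw [← h3, Λ.src_comp a (Λ.comp s b) (by rw [hsb, h1]), Λ.src_comp s b h2]

lemma mid_exists (Λ : KGraph k Obj Hom) (lam : Hom) (p q : Fin k → ℕ)
    (h1 : p ≤ q) (h2 : q ≤ Λ.d lam) : ∃ s, Mid Λ lam s p q := by
  have e1 : Λ.d lam = p + (Λ.d lam - p) := by
    funext i; have hh : p i ≤ Λ.d lam i := (h1.trans h2) i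
    simp only [Pi.add_apply, Pi.sub_apply]; omega
  obtain ⟨⟨a, c⟩, ⟨hac, hacc, hda, hdc⟩, -⟩ := Λ.factor lam p (Λ.d lam - p) e1
  have e2 : Λ.d c = (q - p) + (Λ.d lam - q) := by
    rw [hdc]; funext i; have ha : p i ≤ q i := h1 i; have hb : q i ≤ Λ.d lam i := h2 i
    simp only [Pi.add_apply, Pi.sub_apply]; omega
  obtain ⟨⟨s, b⟩, ⟨hsb, hsbc, hds, hdb⟩, -⟩ := Λ.factor c (q - p) (Λ.d lam - q) e2
  refine ⟨s, a, b, ?_, hsb, ?_, hda, hds, hdb⟩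
  · rw [hac, ← hsbc, Λ.rng_comp s b hsb]
  · rw [hsbc]; exact hacc

lemma mid_unique (Λ : KGraph k Obj Hom) {lam s t : Hom} {p q : Fin k → ℕ}
    (h1 : p ≤ q) (h2 : q ≤ Λ.d lam)
    (hs : Mid Λ lam s p q) (ht : Mid Λ lam t p q) : s = t := by
  obtain ⟨a, b, ha1, ha2, ha3, ha4, ha5, ha6⟩ := hs
  obtain ⟨a', b', hb1, hb2, hb3, hb4, hb5, hb6⟩ := ht
  have e1 : Λ.d lam = p + (Λ.d lam - p) := by
    funext i; have hh : p i ≤ Λ.d lam i := (h1.trans h2) i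
    simp only [Pi.add_apply, Pi.sub_apply]; omega
  have hdsb : Λ.d (Λ.comp s b) = Λ.d lam - p := by
    rw [Λ.d_comp s b ha2, ha5, ha6]; funext i
    have ha : p i ≤ q i := h1 i; have hb : q i ≤ Λ.d lam i := h2 i
    simp only [Pi.add_apply, Pi.sub_apply]; omega
  have hdtb : Λ.d (Λ.comp t b') = Λ.d lam - p := by
    rw [Λ.d_comp t b' hb2, hb5, hb6]; funext i
    have ha : p i ≤ q i := h1 i; have hb : q i ≤ Λ.d lam i := h2 i
    simp only [Pi.add_apply, Pi.sub_apply]; omega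
  have hu := Λ.factor lam p (Λ.d lam - p) e1
  have key := hu.unique (y₁ := (a, Λ.comp s b)) (y₂ := (a', Λ.comp t b'))
    ⟨by rw [Λ.rng_comp s b ha2]; exact ha1, ha3, ha4, hdsb⟩
    ⟨by rw [Λ.rng_comp t b' hb2]; exact hb1, hb3, hb4, hdtb⟩
  have keyc : Λ.comp s b = Λ.comp t b' := congrArg Prod.snd key
  have e2 : Λ.d (Λ.comp s b) = (q - p) + (Λ.d lam - q) := by
    rw [hdsb]; funext i
    have ha : p i ≤ q i := h1 i; have hb : q i ≤ Λ.d lam i := h2 i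
    simp only [Pi.add_apply, Pi.sub_apply]; omega
  have hu2 := Λ.factor (Λ.comp s b) (q - p) (Λ.d lam - q) e2
  have key2 := hu2.unique (y₁ := (s, b)) (y₂ := (t, b'))
    ⟨ha2, rfl, ha5, ha6⟩ ⟨hb2, keyc.symm, hb5, by rw [hb6]⟩
  exact congrArg Prod.fst key2

lemma mid_rng (Λ : KGraph k Obj Hom) {lam s t : Hom} {p q q' : Fin k → ℕ}
    (h1 : p ≤ q) (h2 : q ≤ Λ.d lam) (h1' : p ≤ q') (h2' : q' ≤ Λ.d lam)
    (hs : Mid Λ lam s p q) (ht : Mid Λ lam t p q') : Λ.rng s = Λ.rng t := by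
  obtain ⟨a, b, ha1, ha2, ha3, ha4, ha5, ha6⟩ := hs
  obtain ⟨a', b', hb1, hb2, hb3, hb4, hb5, hb6⟩ := ht
  have e1 : Λ.d lam = p + (Λ.d lam - p) := by
    funext i; have hh : p i ≤ Λ.d lam i := (h1.trans h2) i
    simp only [Pi.add_apply, Pi.sub_apply]; omega
  have hdsb : Λ.d (Λ.comp s b) = Λ.d lam - p := by
    rw [Λ.d_comp s b ha2, ha5, ha6]; funext i
    have ha : p i ≤ q i := h1 i; have hb : q i ≤ Λ.d lam i := h2 i
    simp only [Pi.add_apply, Pi.sub_apply]; omega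
  have hdtb : Λ.d (Λ.comp t b') = Λ.d lam - p := by
    rw [Λ.d_comp t b' hb2, hb5, hb6]; funext i
    have ha : p i ≤ q' i := h1' i; have hb : q' i ≤ Λ.d lam i := h2' i
    simp only [Pi.add_apply, Pi.sub_apply]; omega
  have hu := Λ.factor lam p (Λ.d lam - p) e1
  have key := hu.unique (y₁ := (a, Λ.comp s b)) (y₂ := (a', Λ.comp t b'))
    ⟨by rw [Λ.rng_comp s b ha2]; exact ha1, ha3, ha4, hdsb⟩
    ⟨by rw [Λ.rng_comp t b' hb2]; exact hb1, hb3, hb4, hdtb⟩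
  have keya : a = a' := congrArg Prod.fst key
  rw [← ha1, ← hb1, keya]

lemma mid_comp (Λ : KGraph k Obj Hom) {lam s t : Hom} {p q r : Fin k → ℕ}
    (h1 : p ≤ q) (h2 : q ≤ r) (h3 : r ≤ Λ.d lam)
    (hs : Mid Λ lam s p q) (ht : Mid Λ lam t q r) :
    Λ.src s = Λ.rng t ∧ Mid Λ lam (Λ.comp s t) p r := by
  obtain ⟨a, b, ha1, ha2, ha3, ha4, ha5, ha6⟩ := hs
  obtain ⟨a', b', hb1, hb2, hb3, hb4, hb5, hb6⟩ := ht
  have e1 : Λ.d lam = q + (Λ.d lam - q) := by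
    funext i; have hh : q i ≤ Λ.d lam i := (h2.trans h3) i
    simp only [Pi.add_apply, Pi.sub_apply]; omega
  have hdas : Λ.d (Λ.comp a s) = q := by
    rw [Λ.d_comp a s ha1, ha4, ha5]; funext i
    have ha : p i ≤ q i := h1 i
    simp only [Pi.add_apply, Pi.sub_apply]; omega
  have hdtb : Λ.d (Λ.comp t b') = Λ.d lam - q := by
    rw [Λ.d_comp t b' hb2, hb5, hb6]; funext i
    have ha : q i ≤ r i := h2 i; have hb : r i ≤ Λ.d lam i := h3 i
    simp only [Pi.add_apply, Pi.sub_apply]; omega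
  have hu := Λ.factor lam q (Λ.d lam - q) e1
  have key := hu.unique (y₁ := (Λ.comp a s, b)) (y₂ := (a', Λ.comp t b'))
    ⟨by rw [Λ.src_comp a s ha1]; exact ha2,
     by rw [Λ.comp_assoc a s b ha1 ha2]; exact ha3, hdas, ha6⟩
    ⟨by rw [Λ.rng_comp t b' hb2]; exact hb1, hb3, hb4, hdtb⟩
  have keyb : b = Λ.comp t b' := congrArg Prod.snd key
  have hst : Λ.src s = Λ.rng t := by rw [ha2, keyb, Λ.rng_comp t b' hb2]
  refine ⟨hst, a, b', ?_, ?_, ?_, ha4, ?_, hb6⟩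
  · rw [Λ.rng_comp s t hst]; exact ha1
  · rw [Λ.src_comp s t hst]; exact hb2
  · rw [Λ.comp_assoc s t b' hst hb2, ← keyb]; exact ha3
  · rw [Λ.d_comp s t hst, ha5, hb5]; funext i
    have ha : p i ≤ q i := h1 i; have hb : q i ≤ r i := h2 i
    simp only [Pi.add_apply, Pi.sub_apply]; omega

lemma mid_ext (Λ : KGraph k Obj Hom) {lam Q s : Hom} {p q : Fin k → ℕ}
    (hQ : Λ.src lam = Λ.rng Q) (h2 : q ≤ Λ.d lam)
    (hs : Mid Λ lam s p q) : Mid Λ (Λ.comp lam Q) s p q := by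
  obtain ⟨a, b, ha1, ha2, ha3, ha4, ha5, ha6⟩ := hs
  have hasb : Λ.src a = Λ.rng (Λ.comp s b) := by rw [Λ.rng_comp s b ha2]; exact ha1
  have hbQ : Λ.src b = Λ.rng Q := by
    rw [← hQ, ← ha3, Λ.src_comp a (Λ.comp s b) hasb, Λ.src_comp s b ha2]
  refine ⟨a, Λ.comp b Q, ?_, ?_, ?_, ha4, ha5, ?_⟩
  · exact ha1
  · rw [Λ.rng_comp b Q hbQ]; exact ha2
  · rw [← Λ.comp_assoc s b Q ha2 hbQ,
      ← Λ.comp_assoc a (Λ.comp s b) Q hasb (by rw [Λ.src_comp s b ha2]; exact hbQ), ha3]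
  · rw [Λ.d_comp b Q hbQ, ha6, Λ.d_comp lam Q hQ]; funext i
    have hb : q i ≤ Λ.d lam i := h2 i
    simp only [Pi.add_apply, Pi.sub_apply]; omega

noncomputable def midC (Λ : KGraph k Obj Hom) (lam : Hom) (p q : Fin k → ℕ)
    (h1 : p ≤ q) (h2 : q ≤ Λ.d lam) : Hom := (mid_exists Λ lam p q h1 h2).choose

lemma midC_spec (Λ : KGraph k Obj Hom) (lam : Hom) (p q : Fin k → ℕ)
    (h1 : p ≤ q) (h2 : q ≤ Λ.d lam) : Mid Λ lam (midC Λ lam p q h1 h2) p q :=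
  (mid_exists Λ lam p q h1 h2).choose_spec

lemma finite_paths_aux (Λ : KGraph k Obj Hom) (hRF : RowFinite Λ) (N : ℕ) :
    ∀ (n : Fin k → ℕ) (u : Obj), (∑ i, n i) ≤ N →
      {lam : Hom | Λ.rng lam = u ∧ Λ.d lam = n}.Finite := by
  induction N with
  | zero =>
    intro n u hn
    have hn0 : ∀ i, n i = 0 := by
      intro i
      have := Finset.sum_eq_zero_iff.mp (Nat.le_zero.mp hn) i (Finset.mem_univ i)
      exact this
    apply Set.Finite.subset (Set.finite_singleton (Λ.idm u))
    rintro lam ⟨h1, h2⟩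
    have hz : Λ.d lam = 0 := by rw [h2]; funext i; exact hn0 i
    have := Λ.eq_idm lam hz
    simp only [Set.mem_singleton_iff]
    rw [this, h1]
  | succ N ih =>
    intro n u hn
    rcases eq_or_ne n 0 with hz | hz
    · apply Set.Finite.subset (Set.finite_singleton (Λ.idm u))
      rintro lam ⟨h1, h2⟩
      have := Λ.eq_idm lam (by rw [h2, hz])
      simp only [Set.mem_singleton_iff]
      rw [this, h1]
    · have : ∃ i, n i ≠ 0 := by
        by_contra h; push_neg at h; exact hz (funext h)
      obtain ⟨i, hi⟩ := this
      set e : Fin k → ℕ := Pi.single i 1 with he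
      have hein : ∀ j, e j ≤ n j := by
        intro j
        rcases eq_or_ne j i with rfl | hji
        · simp [he]; omega
        · simp [he, Pi.single_apply, hji]
      have hsum : ∑ j, (n - e) j < ∑ j, n j := by
        apply Finset.sum_lt_sum (fun j _ => by simp only [Pi.sub_apply]; omega)
        refine ⟨i, Finset.mem_univ i, ?_⟩
        simp [Pi.sub_apply, he]; omega
      have hle : ∑ j, (n - e) j ≤ N := by omega
      have hS1 : {a : Hom | Λ.rng a = u ∧ Λ.d a = e}.Finite := hRF u i
      have hT : (⋃ a ∈ {a : Hom | Λ.rng a = u ∧ Λ.d a = e},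
          {b : Hom | Λ.rng b = Λ.src a ∧ Λ.d b = n - e}).Finite :=
        Set.Finite.biUnion hS1 (fun a _ => ih (n - e) (Λ.src a) hle)
      apply Set.Finite.subset (Set.Finite.image (fun ab : Hom × Hom => Λ.comp ab.1 ab.2)
        (hS1.prod hT))
      rintro lam ⟨hr, hd⟩
      have hfac : Λ.d lam = e + (n - e) := by
        rw [hd]; funext j
        have := hein j
        simp only [Pi.add_apply, Pi.sub_apply]; omega
      obtain ⟨⟨a, b⟩, ⟨f1, f2, f3, f4⟩, -⟩ := Λ.factor lam e (n - e) hfac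
      have hau : Λ.rng a = u := by rw [← hr, ← f2, Λ.rng_comp a b f1]
      refine ⟨(a, b), ?_, f2⟩
      refine Set.mem_prod.mpr ⟨⟨hau, f3⟩, ?_⟩
      exact Set.mem_biUnion (⟨hau, f3⟩ : a ∈ {a : Hom | Λ.rng a = u ∧ Λ.d a = e}) ⟨f1.symm, f4⟩

lemma finite_paths (Λ : KGraph k Obj Hom) (hRF : RowFinite Λ) (n : Fin k → ℕ) (u : Obj) :
    {lam : Hom | Λ.rng lam = u ∧ Λ.d lam = n}.Finite :=
  finite_paths_aux Λ hRF (∑ i, n i) n u le_rfl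

def Unreach (Λ : KGraph k Obj Hom) (v z : Obj) : Prop :=
  ∀ μ : Hom, Λ.rng μ = v → Λ.src μ ≠ z

lemma unreach_rng (Λ : KGraph k Obj Hom) {v : Obj} {μ : Hom}
    (h : Unreach Λ v (Λ.src μ)) : Unreach Λ v (Λ.rng μ) := by
  intro ν hν hsrc
  exact h (Λ.comp ν μ) (by rw [Λ.rng_comp ν μ hsrc, hν]) (Λ.src_comp ν μ hsrc)

def Good (Λ : KGraph k Obj Hom) (v u : Obj) : Prop :=
  ∀ N : ℕ, ∃ lam : Hom, Λ.rng lam = u ∧ Λ.d lam = (fun _ => N) ∧ Unreach Λ v (Λ.src lam)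

lemma good_trunc (Λ : KGraph k Obj Hom) {v u : Obj} {M N : ℕ} (hNM : N ≤ M)
    (h : ∃ lam : Hom, Λ.rng lam = u ∧ Λ.d lam = (fun _ => M) ∧ Unreach Λ v (Λ.src lam)) :
    ∃ lam : Hom, Λ.rng lam = u ∧ Λ.d lam = (fun _ => N) ∧ Unreach Λ v (Λ.src lam) := by
  obtain ⟨lam, h1, h2, h3⟩ := h
  have e : Λ.d lam = (fun _ => N) + (fun _ => (M - N)) := by
    rw [h2]; funext i; simp only [Pi.add_apply]; omega
  obtain ⟨⟨s, t⟩, ⟨f1, f2, f3, f4⟩, -⟩ := Λ.factor lam (fun _ => N) (fun _ => (M - N)) e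
  refine ⟨s, by rw [← h1, ← f2, Λ.rng_comp s t f1], f3, ?_⟩
  have hst : Λ.src t = Λ.src lam := by rw [← f2, Λ.src_comp s t f1]
  have h3' : Unreach Λ v (Λ.src t) := by rw [hst]; exact h3
  rw [f1]
  exact unreach_rng Λ h3'

lemma good_step (Λ : KGraph k Obj Hom) (hRF : RowFinite Λ) {v u : Obj} (h : Good Λ v u) :
    ∃ lam : Hom, Λ.rng lam = u ∧ Λ.d lam = (fun _ => 1) ∧ Good Λ v (Λ.src lam) := by
  have key : ∀ N : ℕ, ∃ a : Hom, (Λ.rng a = u ∧ Λ.d a = fun _ => 1) ∧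
      ∃ b : Hom, Λ.rng b = Λ.src a ∧ Λ.d b = (fun _ => N) ∧ Unreach Λ v (Λ.src b) := by
    intro N
    obtain ⟨lam, h1, h2, h3⟩ := h (N + 1)
    have e : Λ.d lam = (fun _ => 1) + (fun _ => N) := by
      rw [h2]; funext i; simp only [Pi.add_apply]; omega
    obtain ⟨⟨a, b⟩, ⟨f1, f2, f3, f4⟩, -⟩ := Λ.factor lam (fun _ => 1) (fun _ => N) e
    refine ⟨a, ⟨by rw [← h1, ← f2, Λ.rng_comp a b f1], f3⟩, b, f1.symm, f4, ?_⟩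
    rw [← f2, Λ.src_comp a b f1] at h3
    exact h3
  choose f hf using key
  have hE := finite_paths Λ hRF (fun _ => 1) u
  have hfin : ∃ a ∈ {lam : Hom | Λ.rng lam = u ∧ Λ.d lam = fun _ => 1},
      {N : ℕ | f N = a}.Infinite := by
    by_contra hc
    push_neg at hc
    have hcov : (Set.univ : Set ℕ) ⊆
        ⋃ a ∈ {lam : Hom | Λ.rng lam = u ∧ Λ.d lam = fun _ => 1}, {N : ℕ | f N = a} := by
      intro N _
      exact Set.mem_biUnion ((hf N).1) rfl
    exact Set.infinite_univ (Set.Finite.subset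
      (Set.Finite.biUnion hE (fun a ha => hc a ha)) hcov)
  obtain ⟨a, ha, hinf⟩ := hfin
  refine ⟨a, ha.1, ha.2, ?_⟩
  intro N
  obtain ⟨M, hM, hNM⟩ := hinf.exists_gt N
  apply good_trunc Λ (le_of_lt hNM)
  obtain ⟨b, hb1, hb2, hb3⟩ := (hf M).2
  rw [hM] at hb1
  exact ⟨b, hb1, hb2, hb3⟩

end Aux
/-- A row-finite `k`-graph with no sources which is not cofinal admits a vertex
`v` and an infinite path `x` with `vΛx(n) = ∅` for all `n ∈ ℕ^k`. -/
theorem not_cofinal_gives_unreachable_infinite_path {k : ℕ} {Obj Hom : Type}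
    (Λ : KGraph k Obj Hom) (hRF : RowFinite Λ) (hNS : NoSources Λ)
    (hnc : ¬ Cofinal Λ) :
    ∃ (v : Obj) (x : InfPath Λ), ∀ (n : Fin k → ℕ) (μ : Hom),
      Λ.rng μ = v → Λ.src μ ≠ x.vert n := by
  rw [Cofinal] at hnc
  push_neg at hnc
  obtain ⟨v, w, hvw⟩ := hnc
  have hGw : Good Λ v w := by
    intro N
    obtain ⟨lam, h1, h2, h3⟩ := hvw (fun _ => N)
    exact ⟨lam, h1, h2, h3⟩
  have hstep : ∀ u : Obj, Good Λ v u →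
      ∃ lam, Λ.rng lam = u ∧ Λ.d lam = (fun _ => 1) ∧ Good Λ v (Λ.src lam) :=
    fun u hu => good_step Λ hRF hu
  choose F hF1 hF2 hF3 using hstep
  let C : ℕ → {u : Obj // Good Λ v u} := fun m =>
    Nat.rec ⟨w, hGw⟩ (fun _ p => ⟨Λ.src (F p.1 p.2), hF3 p.1 p.2⟩) m
  let P : ℕ → Hom := fun m =>
    Nat.rec (Λ.idm w) (fun m' Pm => Λ.comp Pm (F (C m').1 (C m').2)) m
  have hPsucc : ∀ m, P (m + 1) = Λ.comp (P m) (F (C m).1 (C m).2) := fun m => rfl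
  have hPs : ∀ m, Λ.src (P m) = (C m).1 := by
    intro m
    induction m with
    | zero => exact Λ.src_idm w
    | succ m ih =>
      rw [hPsucc m, Λ.src_comp _ _ (by rw [ih, hF1])]
  have hsrcrng : ∀ m, Λ.src (P m) = Λ.rng (F (C m).1 (C m).2) := fun m => by
    rw [hPs m, hF1]
  have hPr : ∀ m, Λ.rng (P m) = w := by
    intro m
    induction m with
    | zero => exact Λ.rng_idm w
    | succ m ih => rw [hPsucc m, Λ.rng_comp _ _ (hsrcrng m), ih]
  have hPd : ∀ m, Λ.d (P m) = (fun _ => (m : ℕ)) := by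
    intro m
    induction m with
    | zero =>
      rw [show P 0 = Λ.idm w from rfl, Λ.d_idm]
      funext i; simp
    | succ m ih =>
      rw [hPsucc m, Λ.d_comp _ _ (hsrcrng m), ih, hF2]
      funext i; simp
  have hPext : ∀ m m', m ≤ m' → ∃ Q, Λ.src (P m) = Λ.rng Q ∧ P m' = Λ.comp (P m) Q := by
    intro m m' hmm'
    induction m', hmm' using Nat.le_induction with
    | base => exact ⟨Λ.idm (Λ.src (P m)), (Λ.rng_idm _).symm, (Λ.comp_idm _).symm⟩
    | succ m' hmm' ih =>
      obtain ⟨Q, hQ1, hQ2⟩ := ih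
      have hQsrc : Λ.src Q = Λ.rng (F (C m').1 (C m').2) := by
        rw [← hsrcrng m', hQ2, Λ.src_comp _ _ hQ1]
      refine ⟨Λ.comp Q (F (C m').1 (C m').2), ?_, ?_⟩
      · rw [Λ.rng_comp _ _ hQsrc]; exact hQ1
      · rw [hPsucc m', hQ2, Λ.comp_assoc _ _ _ hQ1 hQsrc]
  have hCunreach : ∀ m, Unreach Λ v (C m).1 := by
    intro m
    obtain ⟨lam, h1, h2, h3⟩ := (C m).2 0
    have hz : Λ.d lam = 0 := by rw [h2]; funext i; simp
    have hsl : Λ.src lam = (C m).1 := by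
      rw [(congrArg Λ.src (Λ.eq_idm lam hz)).trans (Λ.src_idm _), h1]
    rw [← hsl]
    exact h3
  have hqle : ∀ q : Fin k → ℕ, q ≤ (fun _ => Finset.univ.sup q) :=
    fun q i => Finset.le_sup (Finset.mem_univ i)
  have hsle : ∀ q : Fin k → ℕ, q ≤ Λ.d (P (Finset.univ.sup q)) := by
    intro q; rw [hPd]; exact hqle q
  have hsup_mono : ∀ {p q : Fin k → ℕ}, p ≤ q → Finset.univ.sup p ≤ Finset.univ.sup q :=
    fun h => Finset.sup_mono_fun (fun i _ => h i)
  have hstab : ∀ {m m' : ℕ} {p q : Fin k → ℕ} {s : Hom}, q ≤ (fun _ => m) → m ≤ m' →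
      Mid Λ (P m) s p q → Mid Λ (P m') s p q := by
    intro m m' p q s hq hmm hs
    obtain ⟨Q, hQ1, hQ2⟩ := hPext m m' hmm
    rw [hQ2]
    exact mid_ext Λ hQ1 (by rw [hPd]; exact hq) hs
  refine ⟨v, ⟨fun p => Λ.rng (midC Λ (P (Finset.univ.sup p)) p p le_rfl (hsle p)),
    fun p q h => midC Λ (P (Finset.univ.sup q)) p q h (hsle q), ?_, ?_, ?_, ?_⟩, ?_⟩
  · -- rng_seg
    intro p q h
    have hs := midC_spec Λ (P (Finset.univ.sup q)) p q h (hsle q)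
    have ht := hstab (hqle p) (hsup_mono h)
      (midC_spec Λ (P (Finset.univ.sup p)) p p le_rfl (hsle p))
    exact mid_rng Λ h (hsle q) le_rfl (h.trans (hsle q)) hs ht
  · -- src_seg
    intro p q h
    have hs := midC_spec Λ (P (Finset.univ.sup q)) p q h (hsle q)
    have ht := midC_spec Λ (P (Finset.univ.sup q)) q q le_rfl (hsle q)
    exact (mid_comp Λ h le_rfl (hsle q) hs ht).1
  · -- d_seg
    intro p q h
    exact mid_d Λ (midC_spec Λ (P (Finset.univ.sup q)) p q h (hsle q))
  · -- comp_seg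
    intro p q r h1 h2
    have hs := hstab (hqle q) (hsup_mono h2)
      (midC_spec Λ (P (Finset.univ.sup q)) p q h1 (hsle q))
    have ht := midC_spec Λ (P (Finset.univ.sup r)) q r h2 (hsle r)
    have h3 := (mid_comp Λ h1 h2 (hsle r) hs ht).2
    exact mid_unique Λ (h1.trans h2) (hsle r) h3
      (midC_spec Λ (P (Finset.univ.sup r)) p r (h1.trans h2) (hsle r))
  · -- unreachability
    intro n μ hμ
    show Λ.src μ ≠ Λ.rng (midC Λ (P (Finset.univ.sup n)) n n le_rfl (hsle n))
    have hs := midC_spec Λ (P (Finset.univ.sup n)) n n le_rfl (hsle n)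
    obtain ⟨b, hb1, hb2⟩ := mid_tail Λ hs
    have hub : Unreach Λ v (Λ.src b) := by rw [hb2, hPs]; exact hCunreach _
    have hur : Unreach Λ v (Λ.rng b) := unreach_rng Λ hub
    have h0 : Λ.d (midC Λ (P (Finset.univ.sup n)) n n le_rfl (hsle n)) = 0 := by
      rw [mid_d Λ hs]
      funext i; simp
    have hsi : Λ.src (midC Λ (P (Finset.univ.sup n)) n n le_rfl (hsle n)) =
        Λ.rng (midC Λ (P (Finset.univ.sup n)) n n le_rfl (hsle n)) :=
      (congrArg Λ.src (Λ.eq_idm _ h0)).trans (Λ.src_idm _)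
    intro hc
    exact hur μ hμ (hc.trans (hsi.symm.trans hb1))

end Paper
end
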